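/- arXiv:2306.01724 — 4 statements merged into one kernel-verified Lean document; each statement's English description precedes it below -/
import Mathlib

section
/- Let k be a positive integer, α ∈ [2/3, 1), G a graph and S ⊆ V(G) a (k,α)-well-linked set. Then there exists an S-free set F ⊆ V(G) of size k−1. -/
open SimpleGraph

/-- `H` is a minor of `G`: branch sets are nonempty, connected, pairwise disjoint,
and every edge of `H` is realized by an edge of `G` between the branch sets. -/
def IsMinor {V W : Type*} (H : SimpleGraph V) (G : SimpleGraph W) : Prop :=
  ∃ S : V → Set W,
    (∀ a, (G.induce (S a)).Connected) ∧
    (∀ a b, a ≠ b → Disjoint (S a) (S b)) ∧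
    (∀ a b, H.Adj a b → ∃ x ∈ S a, ∃ y ∈ S b, G.Adj x y)

/-- `H` is an `X`-minor of `G`: additionally every branch set meets `X`. -/
def IsMinorOn {V W : Type*} (H : SimpleGraph V) (G : SimpleGraph W) (X : Set W) : Prop :=
  ∃ S : V → Set W,
    (∀ a, (G.induce (S a)).Connected) ∧
    (∀ a, (S a ∩ X).Nonempty) ∧
    (∀ a b, a ≠ b → Disjoint (S a) (S b)) ∧
    (∀ a b, H.Adj a b → ∃ x ∈ S a, ∃ y ∈ S b, G.Adj x y)

/-- The `(k × k)`-grid graph. -/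
def gridGraph (k : ℕ) : SimpleGraph (Fin k × Fin k) :=
  SimpleGraph.fromRel fun p q =>
    (p.1 = q.1 ∧ (p.2 : ℕ) + 1 = (q.2 : ℕ)) ∨ (p.2 = q.2 ∧ (p.1 : ℕ) + 1 = (q.1 : ℕ))

/-- `bg(G, X)`: the largest `k` such that the `(k × k)`-grid is an `X`-minor of `G`. -/
noncomputable def bgAnn {V : Type*} (G : SimpleGraph V) (X : Set V) : ℕ :=
  sSup {k | IsMinorOn (gridGraph k) G X}

/-- The Hadwiger number: the largest `t` with `K_t` a minor of `G`. -/
noncomputable def hw {V : Type*} (G : SimpleGraph V) : ℕ :=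
  sSup {t | IsMinor (⊤ : SimpleGraph (Fin t)) G}

/-- The adjacency relation of the mixed surface grid of order `k` with `b` blocks,
crosscap positions `Ic` and handle positions `Ih`. -/
def msgRel (k b : ℕ) (Ic Ih : Finset ℕ) (p q : Fin k × ZMod (4 * b * k)) : Prop :=
  (p.1 = q.1 ∧ q.2 = p.2 + 1) ∨
  (p.2 = q.2 ∧ (p.1 : ℕ) + 1 = (q.1 : ℕ)) ∨
  ((p.1 : ℕ) = 0 ∧ (q.1 : ℕ) = 0 ∧
    ((∃ i ∈ Ic, ∃ j ∈ Finset.Icc 1 (2 * k),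
        p.2 = ((4 * k * (i - 1) + j : ℕ) : ZMod (4 * b * k)) ∧
        q.2 = ((4 * k * (i - 1) + 2 * k + j : ℕ) : ZMod (4 * b * k))) ∨
     (∃ i ∈ Ih, ∃ j ∈ Finset.Icc 1 k,
        ((p.2 = ((4 * k * (i - 1) + j : ℕ) : ZMod (4 * b * k)) ∧
          q.2 = ((4 * k * (i - 1) + 3 * k - j + 1 : ℕ) : ZMod (4 * b * k))) ∨
         (p.2 = ((4 * k * (i - 1) + k + j : ℕ) : ZMod (4 * b * k)) ∧
          q.2 = ((4 * k * (i - 1) + 4 * k + j - 1 : ℕ) : ZMod (4 * b * k)))))))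

/-- The mixed surface grid of order `k` with `b` blocks, crosscaps at the positions of `Ic`
and handles at the positions of `Ih`. -/
def mixedSurfaceGrid (k b : ℕ) (Ic Ih : Finset ℕ) : SimpleGraph (Fin k × ZMod (4 * b * k)) :=
  SimpleGraph.fromRel (msgRel k b Ic Ih)

/-- The Dyck-grid `D_k^{(h,c)}`. -/
def dyckGrid (k h c : ℕ) : SimpleGraph (Fin k × ZMod (4 * (h + c + 1) * k)) :=
  mixedSurfaceGrid k (h + c + 1) (Finset.Icc (h + 2) (h + c + 1)) (Finset.Icc 2 (h + 1))

/-- The reduced Dyck-grid `D̃_k^{(h,c)}` (no plain annulus block). -/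
def reducedDyckGrid (k h c : ℕ) : SimpleGraph (Fin k × ZMod (4 * (h + c) * k)) :=
  mixedSurfaceGrid k (h + c) (Finset.Icc (h + 1) (h + c)) (Finset.Icc 1 h)

/-- `(A, B)` is a separation of `G`. -/
def IsSep {V : Type*} (G : SimpleGraph V) (A B : Set V) : Prop :=
  A ∪ B = Set.univ ∧ ∀ u v, G.Adj u v → u ∈ A \ B → v ∉ B \ A

/-- `Z` is an `α`-balanced separator for `S` in `G`. -/
def IsBalSep {V : Type*} (G : SimpleGraph V) (α : ℝ) (S Z : Set V) : Prop :=
  ∀ C : (G.induce Zᶜ).ConnectedComponent,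
    ((((Subtype.val '' C.supp) ∩ S).ncard : ℝ)) ≤ α * (S.ncard : ℝ)

/-- `S` is `(q, α)`-well-linked in `G`. -/
def WellLinked {V : Type*} (G : SimpleGraph V) (q : ℕ) (α : ℝ) (S : Set V) : Prop :=
  ∀ Z : Set V, Z.ncard ≤ q → ¬ IsBalSep G α S Z

/-- `T` is a tangle of order `k` in `G`. -/
def IsTangle {V : Type*} (G : SimpleGraph V) (k : ℕ) (T : Set (Set V × Set V)) : Prop :=
  (∀ p ∈ T, IsSep G p.1 p.2 ∧ (p.1 ∩ p.2).ncard < k) ∧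
  (∀ A B : Set V, IsSep G A B → (A ∩ B).ncard < k →
      (((A, B) ∈ T ∧ (B, A) ∉ T) ∨ ((B, A) ∈ T ∧ (A, B) ∉ T))) ∧
  (∀ p q r, p ∈ T → q ∈ T → r ∈ T → p.1 ∪ q.1 ∪ r.1 ≠ Set.univ)

/-- The tangle `𝒯_S` induced by a `(q, α)`-well-linked set `S`. -/
def wlTangle {V : Type*} (G : SimpleGraph V) (q : ℕ) (α : ℝ) (S : Set V) :
    Set (Set V × Set V) :=
  {p | IsSep G p.1 p.2 ∧ (p.1 ∩ p.2).ncard ≤ q ∧ α * (S.ncard : ℝ) < ((S ∩ p.2).ncard : ℝ)}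

/-- `F` is `S`-free in `G`. -/
def SFree {V : Type*} (G : SimpleGraph V) (α : ℝ) (S F : Set V) : Prop :=
  ∀ A B : Set V, IsSep G A B → (A ∩ B).ncard < F.ncard →
    (F ⊆ A → α * (S.ncard : ℝ) < ((A ∩ S).ncard : ℝ)) ∧
    (F ⊆ B → α * (S.ncard : ℝ) < ((B ∩ S).ncard : ℝ))

/-- `S` is strongly linked in `G`. -/
def StronglyLinked {V : Type*} (G : SimpleGraph V) (S : Set V) : Prop :=
  ∀ S₁ S₂ : Set V, S₁ ∪ S₂ = S → Disjoint S₁ S₂ → S₁.Nonempty → S₂.Nonempty →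
    ∀ A₁ A₂ : Set V, IsSep G A₁ A₂ → S₁ ⊆ A₁ → S₂ ⊆ A₂ →
      min S₁.ncard S₂.ncard ≤ (A₁ ∩ A₂).ncard

/-- The `(k × 2k)`-grid with the appropriate vertical edges removed (before deleting
degree-one vertices). -/
def wallPre (k : ℕ) : SimpleGraph (Fin k × Fin (2 * k)) :=
  SimpleGraph.fromRel fun p q =>
    (p.1 = q.1 ∧ (p.2 : ℕ) + 1 = (q.2 : ℕ)) ∨
    (p.2 = q.2 ∧ (p.1 : ℕ) + 1 = (q.1 : ℕ) ∧ ((p.1 : ℕ) + (p.2 : ℕ)) % 2 = 1)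

/-- The vertices of the elementary `k`-wall: vertices of `wallPre` of degree at least two. -/
def wallVerts (k : ℕ) : Set (Fin k × Fin (2 * k)) :=
  {v | ∃ a b, a ≠ b ∧ (wallPre k).Adj v a ∧ (wallPre k).Adj v b}

/-- The elementary `k`-wall. -/
def elemWall (k : ℕ) : SimpleGraph (wallVerts k) :=
  (wallPre k).induce (wallVerts k)

/-- `(f, p)` is a subdivision of `H` embedded as a subgraph of `G`. -/
def IsSubdivEmbed {V W : Type*} (H : SimpleGraph V) (G : SimpleGraph W)
    (f : V → W) (p : ∀ u v, H.Adj u v → G.Walk (f u) (f v)) : Prop :=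
  Function.Injective f ∧
  (∀ u v (h : H.Adj u v), (p u v h).IsPath) ∧
  (∀ u v (h : H.Adj u v), (p u v h).support = (p v u h.symm).support) ∧
  (∀ u v (h : H.Adj u v), ∀ w ∈ (p u v h).support, w ∈ Set.range f → w = f u ∨ w = f v) ∧
  (∀ u v u' v' (h : H.Adj u v) (h' : H.Adj u' v'), s(u, v) ≠ s(u', v') →
    ∀ w : W, w ∈ (p u v h).support → w ∈ (p u' v' h').support →
      ((w = f u ∨ w = f v) ∧ (w = f u' ∨ w = f v')))

/-- The vertex set in `G` of the `i`-th row of an embedded `k`-wall. -/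
def wallRowSet {V : Type*} {G : SimpleGraph V} (k : ℕ)
    (f : wallVerts k → V) (p : ∀ u v, (elemWall k).Adj u v → G.Walk (f u) (f v))
    (i : Fin k) : Set V :=
  (f '' {v | v.val.1 = i}) ∪
  {w | ∃ u v, ∃ h : (elemWall k).Adj u v,
      u.val.1 = i ∧ v.val.1 = i ∧ w ∈ (p u v h).support}

/-- The vertex set in `G` of the `j`-th column of an embedded `k`-wall. -/
def wallColSet {V : Type*} {G : SimpleGraph V} (k : ℕ)
    (f : wallVerts k → V) (p : ∀ u v, (elemWall k).Adj u v → G.Walk (f u) (f v))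
    (j : Fin k) : Set V :=
  (f '' {v | (v.val.2 : ℕ) / 2 = (j : ℕ)}) ∪
  {w | ∃ u v, ∃ h : (elemWall k).Adj u v,
      (u.val.2 : ℕ) / 2 = (j : ℕ) ∧ (v.val.2 : ℕ) / 2 = (j : ℕ) ∧ w ∈ (p u v h).support}

/-- The tangle `𝒯_W` induced by an embedded `k`-wall. -/
def wallTangle {V : Type*} (G : SimpleGraph V) (k : ℕ)
    (f : wallVerts k → V) (p : ∀ u v, (elemWall k).Adj u v → G.Walk (f u) (f v)) :
    Set (Set V × Set V) :=
  {AB | IsSep G AB.1 AB.2 ∧ (AB.1 ∩ AB.2).ncard < k ∧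
    ∃ i j : Fin k, wallRowSet k f p i ⊆ AB.2 \ AB.1 ∧ wallColSet k f p j ⊆ AB.2 \ AB.1}

/-- All vertices of `G` used by an embedded `k`-wall. -/
def wallSupport {V : Type*} {G : SimpleGraph V} (k : ℕ)
    (f : wallVerts k → V) (p : ∀ u v, (elemWall k).Adj u v → G.Walk (f u) (f v)) : Set V :=
  Set.range f ∪ {w | ∃ u v, ∃ h : (elemWall k).Adj u v, w ∈ (p u v h).support}

/-- `(T, β)` is a tree-decomposition of `G`. -/
def IsTreeDecomp {V : Type*} {ι : Type*} (G : SimpleGraph V) (T : SimpleGraph ι)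
    (β : ι → Set V) : Prop :=
  T.IsTree ∧
  (∀ v : V, ∃ t, v ∈ β t) ∧
  (∀ u v, G.Adj u v → ∃ t, u ∈ β t ∧ v ∈ β t) ∧
  (∀ v : V, (T.induce {t | v ∈ β t}).Connected)

/-- The torso of a tree-decomposition `(T, β)` of `G` at a node `t`. -/
def torso {V : Type*} {ι : Type*} (G : SimpleGraph V) (T : SimpleGraph ι)
    (β : ι → Set V) (t : ι) : SimpleGraph (β t) :=
  SimpleGraph.fromRel fun u v =>
    G.Adj u v ∨ ∃ t', T.Adj t t' ∧ (u : V) ∈ β t' ∧ (v : V) ∈ β t'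

/-- The graph `G^c` on `V(G)` with edge set `E(G) ∪ E(G_t)`. -/
def withTorsoEdges {V : Type*} {ι : Type*} (G : SimpleGraph V) (T : SimpleGraph ι)
    (β : ι → Set V) (t : ι) : SimpleGraph V :=
  SimpleGraph.fromRel fun u v =>
    G.Adj u v ∨ ∃ (hu : u ∈ β t) (hv : v ∈ β t), (torso G T β t).Adj ⟨u, hu⟩ ⟨v, hv⟩

/-- Interior vertices of the `(t+2) × (t+2)`-grid. -/
def gridInterior (t : ℕ) (p : Fin (t + 2) × Fin (t + 2)) : Prop :=
  0 < (p.1 : ℕ) ∧ (p.1 : ℕ) < t + 1 ∧ 0 < (p.2 : ℕ) ∧ (p.2 : ℕ) < t + 1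

/-- The `(t+2) × (t+2)`-grid with all edges whose two endpoints have degree
less than four removed. -/
def crossedPre (t : ℕ) : SimpleGraph (Fin (t + 2) × Fin (t + 2)) :=
  SimpleGraph.fromRel fun a b =>
    ((a.1 = b.1 ∧ (a.2 : ℕ) + 1 = (b.2 : ℕ)) ∨ (a.2 = b.2 ∧ (a.1 : ℕ) + 1 = (b.1 : ℕ))) ∧
    (gridInterior t a ∨ gridInterior t b)

/-- The line graph of `K`. -/
def lineGraph' {W : Type*} (K : SimpleGraph W) : SimpleGraph K.edgeSet :=
  SimpleGraph.fromRel fun e f => ∃ x, x ∈ (e : Sym2 W) ∧ x ∈ (f : Sym2 W)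

/-- `G` contains a crossed `t`-grid as a subgraph. -/
def ContainsCrossedGrid {V : Type*} (t : ℕ) (G : SimpleGraph V) : Prop :=
  ∃ (n : ℕ) (K : SimpleGraph (Fin n))
    (f : Fin (t + 2) × Fin (t + 2) → Fin n)
    (p : ∀ u v, (crossedPre t).Adj u v → K.Walk (f u) (f v)),
    IsSubdivEmbed (crossedPre t) K f p ∧
    (∀ w : Fin n, ∃ u v h, w ∈ (p u v h).support) ∧
    (∀ e ∈ K.edgeSet, ∃ u v h, e ∈ (p u v h).edges) ∧
    (∀ u v (h : (crossedPre t).Adj u v), 2 ≤ (p u v h).length) ∧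
    ∃ φ : K.edgeSet → V, Function.Injective φ ∧
      ∀ e e', (lineGraph' K).Adj e e' → G.Adj (φ e) (φ e')

/-- The satellite-augmented reduced Dyck-grid `D̂_k^{(h,c)}`. -/
def hatRel (k h c : ℕ)
    (a b : (Fin k × ZMod (4 * (h + c) * k)) ⊕ (Fin (h + c) × Fin k)) : Prop :=
  (∃ p q, a = Sum.inl p ∧ b = Sum.inl q ∧
     msgRel k (h + c) (Finset.Icc (h + 1) (h + c)) (Finset.Icc 1 h) p q) ∨
  (∃ s p, a = Sum.inr s ∧ b = Sum.inl p ∧ (p.1 : ℕ) = 0 ∧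
     ∃ j ∈ Finset.Icc 1 4,
       p.2 = ((4 * k * (s.1 : ℕ) + 4 * (s.2 : ℕ) + j : ℕ) : ZMod (4 * (h + c) * k)))

def hatDyckGrid (k h c : ℕ) :
    SimpleGraph ((Fin k × ZMod (4 * (h + c) * k)) ⊕ (Fin (h + c) × Fin k)) :=
  SimpleGraph.fromRel (hatRel k h c)
section AuxFreeSet

variable {V : Type} {G : SimpleGraph V}

private lemma isSep_symm' {A B : Set V} (h : IsSep G A B) : IsSep G B A := by
  refine ⟨by rw [Set.union_comm]; exact h.1, ?_⟩
  intro u v hadj hu hv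
  exact (h.2 v u hadj.symm hv) hu

private lemma isSep_corner {A B C D : Set V} (hAB : IsSep G A B) (hCD : IsSep G C D) :
    IsSep G (A ∪ C) (B ∩ D) := by
  have hABu := Set.eq_univ_iff_forall.mp hAB.1
  have hCDu := Set.eq_univ_iff_forall.mp hCD.1
  constructor
  · rw [Set.eq_univ_iff_forall]
    intro v
    rcases hABu v with h | h
    · exact Or.inl (Or.inl h)
    rcases hCDu v with h' | h'
    · exact Or.inl (Or.inr h')
    · exact Or.inr ⟨h, h'⟩
  · intro u v hadj hu hv
    obtain ⟨huAC, huBD⟩ := hu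
    obtain ⟨⟨hvB, hvD⟩, hvAC⟩ := hv
    have hvA : v ∉ A := fun h => hvAC (Or.inl h)
    have hvC : v ∉ C := fun h => hvAC (Or.inr h)
    rcases huAC with hA | hC
    · by_cases hB : u ∈ B
      · have hD : u ∉ D := fun h => huBD ⟨hB, h⟩
        have hC : u ∈ C := (hCDu u).resolve_right hD
        exact hCD.2 u v hadj ⟨hC, hD⟩ ⟨hvD, hvC⟩
      · exact hAB.2 u v hadj ⟨hA, hB⟩ ⟨hvB, hvA⟩
    · by_cases hD : u ∈ D
      · have hB : u ∉ B := fun h => huBD ⟨h, hD⟩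
        have hA : u ∈ A := (hABu u).resolve_right hB
        exact hAB.2 u v hadj ⟨hA, hB⟩ ⟨hvB, hvA⟩
      · exact hCD.2 u v hadj ⟨hC, hD⟩ ⟨hvD, hvC⟩

/-- Propagation of the side of a separation along a walk in `G.induce Zᶜ` staying in a
connected component. -/
private lemma walk_side {Z P Q : Set V} (hPQ : IsSep G P Q)
    (CC : (G.induce Zᶜ).ConnectedComponent)
    (hdisj : ∀ x ∈ Subtype.val '' CC.supp, x ∉ P ∩ Q) :
    ∀ (a b : ↥(Zᶜ)) (_ : (G.induce Zᶜ).Walk a b), a ∈ CC.supp → (a : V) ∈ P \ Q →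
      (b : V) ∈ P \ Q ∧ b ∈ CC.supp := by
  intro a b w
  induction w with
  | nil => exact fun h1 h2 => ⟨h2, h1⟩
  | @cons u x b hadj p ih =>
    intro hu hup
    have hx : x ∈ CC.supp := by
      rw [SimpleGraph.ConnectedComponent.mem_supp_iff] at hu ⊢
      rw [← hu]
      exact (SimpleGraph.ConnectedComponent.sound hadj.reachable).symm
    have hGadj : G.Adj u.val x.val := hadj
    have hxPQ : (x : V) ∉ P ∩ Q := hdisj _ ⟨x, hx, rfl⟩
    have hxQ : (x : V) ∉ Q \ P := hPQ.2 u.val x.val hGadj hup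
    have hxP : (x : V) ∈ P \ Q := by
      rcases Set.eq_univ_iff_forall.mp hPQ.1 (x : V) with h | h
      · exact ⟨h, fun hq => hxPQ ⟨h, hq⟩⟩
      · by_cases hp : (x : V) ∈ P
        · exact ⟨hp, fun hq => hxPQ ⟨hp, hq⟩⟩
        · exact absurd ⟨h, hp⟩ hxQ
    exact ih hx hxP

end AuxFreeSet

/-- Lemma 3.5: every `(k, α)`-well-linked set admits an `S`-free set of
size `k - 1`. -/
theorem exists_free_set
    (V : Type) [Finite V] (G : SimpleGraph V) (k : ℕ) (hk : 1 ≤ k)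
    (α : ℝ) (hα1 : 2 / 3 ≤ α) (hα2 : α < 1) (S : Set V)
    (hS : WellLinked G k α S) :
    ∃ F : Set V, F.ncard = k - 1 ∧ SFree G α S F := by
  classical
  have hSfin : S.Finite := Set.toFinite S
  have hα0 : (0 : ℝ) ≤ α := by linarith
  have hαS0 : (0 : ℝ) ≤ α * S.ncard := mul_nonneg hα0 (Nat.cast_nonneg _)
  -- heavy sets are nonempty on S
  have hne_of_heavy : ∀ T : Set V, α * S.ncard < ((T ∩ S).ncard : ℝ) → (T ∩ S).Nonempty := by
    intro T hT
    have h0 : (0 : ℝ) < ((T ∩ S).ncard : ℝ) := lt_of_le_of_lt hαS0 hT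
    exact Set.nonempty_of_ncard_ne_zero (by exact_mod_cast h0.ne')
  -- heaviness is monotone
  have heavy_mono : ∀ K T : Set V, K ⊆ T → α * S.ncard < ((K ∩ S).ncard : ℝ) →
      α * S.ncard < ((T ∩ S).ncard : ℝ) := by
    intro K T hsub hh
    refine lt_of_lt_of_le hh ?_
    exact_mod_cast Set.ncard_le_ncard (Set.inter_subset_inter_left S hsub) (Set.toFinite _)
  -- extraction of a heavy connected piece avoiding any small `Z`
  have hcomp : ∀ Z : Set V, Z.ncard ≤ k → ∃ K : Set V,
      (∀ x ∈ K, x ∉ Z) ∧ α * S.ncard < ((K ∩ S).ncard : ℝ) ∧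
      ∀ P Q : Set V, IsSep G P Q → (∀ x ∈ K, x ∉ P ∩ Q) →
        K ⊆ P \ Q ∨ K ⊆ Q \ P := by
    intro Z hZ
    have h1 := hS Z hZ
    unfold IsBalSep at h1
    push_neg at h1
    obtain ⟨CC, hCC⟩ := h1
    refine ⟨Subtype.val '' CC.supp, ?_, hCC, ?_⟩
    · rintro x ⟨y, hy, rfl⟩
      exact y.2
    · intro P Q hPQ hdisj
      obtain ⟨x0, hx0K, _⟩ := hne_of_heavy _ hCC
      obtain ⟨u0, hu0, rfl⟩ := hx0K
      have hu0n : (u0 : V) ∉ P ∩ Q := hdisj _ ⟨u0, hu0, rfl⟩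
      have hreach : ∀ y : ↥(Zᶜ), y ∈ CC.supp → (G.induce Zᶜ).Reachable u0 y := by
        intro y hy
        rw [SimpleGraph.ConnectedComponent.mem_supp_iff] at hy hu0
        exact SimpleGraph.ConnectedComponent.exact (hu0.trans hy.symm)
      rcases Set.eq_univ_iff_forall.mp hPQ.1 (u0 : V) with hP | hQ
      · have hu0P : (u0 : V) ∈ P \ Q := ⟨hP, fun hq => hu0n ⟨hP, hq⟩⟩
        left
        rintro _ ⟨y, hy, rfl⟩
        obtain ⟨w⟩ := hreach y hy
        exact (walk_side hPQ CC hdisj u0 y w hu0 hu0P).1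
      · by_cases hP : (u0 : V) ∈ P
        · have hu0P : (u0 : V) ∈ P \ Q := ⟨hP, fun hq => hu0n ⟨hP, hq⟩⟩
          left
          rintro _ ⟨y, hy, rfl⟩
          obtain ⟨w⟩ := hreach y hy
          exact (walk_side hPQ CC hdisj u0 y w hu0 hu0P).1
        · have hu0Q : (u0 : V) ∈ Q \ P := ⟨hQ, hP⟩
          right
          rintro _ ⟨y, hy, rfl⟩
          obtain ⟨w⟩ := hreach y hy
          have hdisj' : ∀ x ∈ Subtype.val '' CC.supp, x ∉ Q ∩ P :=
            fun x hx h => hdisj x hx ⟨h.2, h.1⟩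
          exact (walk_side (isSep_symm' hPQ) CC hdisj' u0 y w hu0 hu0Q).1
  -- `S` is large: `k < (1 - α) |S|`
  have hSk : (k : ℝ) < (1 - α) * S.ncard := by
    rcases le_or_gt S.ncard k with hle | hlt
    · exfalso
      obtain ⟨K, hKZ, hKheavy, _⟩ := hcomp S hle
      have hKS : K ∩ S = ∅ := by
        ext x
        simp only [Set.mem_inter_iff, Set.mem_empty_iff_false, iff_false, not_and]
        exact fun hK hS' => hKZ x hK hS'
      rw [hKS] at hKheavy
      simp only [Set.ncard_empty, Nat.cast_zero] at hKheavy
      exact absurd hKheavy (not_lt.mpr hαS0)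
    · obtain ⟨Z, hZS, hZcard⟩ := Set.exists_subset_card_eq hlt.le
      obtain ⟨K, hKZ, hKheavy, _⟩ := hcomp Z (le_of_eq hZcard)
      have hsub : K ∩ S ⊆ S \ Z := fun x hx => ⟨hx.2, hKZ x hx.1⟩
      have h2 : ((K ∩ S).ncard : ℝ) ≤ ((S \ Z).ncard : ℝ) := by
        exact_mod_cast Set.ncard_le_ncard hsub (Set.toFinite _)
      have h3 : ((S \ Z).ncard : ℝ) = (S.ncard : ℝ) - k := by
        rw [Set.cast_ncard_sdiff hZS hSfin, hZcard]
      have h4 : (1 - α) * S.ncard = (S.ncard : ℝ) - α * S.ncard := by ring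
      rw [h4]
      rw [h3] at h2
      linarith
  -- a separation of order at most `k` cannot have two heavy sides
  have hnotboth : ∀ C D : Set V, IsSep G C D → (C ∩ D).ncard ≤ k →
      α * S.ncard < ((C ∩ S).ncard : ℝ) → α * S.ncard < ((D ∩ S).ncard : ℝ) → False := by
    intro C D hsep hord hC hD
    have hunion : (C ∩ S) ∪ (D ∩ S) = S := by
      rw [← Set.union_inter_distrib_right, hsep.1, Set.univ_inter]
    have hinter : (C ∩ S) ∩ (D ∩ S) = C ∩ D ∩ S := by
      ext x
      simp only [Set.mem_inter_iff]
      tauto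
    have hsum : ((C ∩ S) ∪ (D ∩ S)).ncard + ((C ∩ S) ∩ (D ∩ S)).ncard
        = (C ∩ S).ncard + (D ∩ S).ncard :=
      Set.ncard_union_add_ncard_inter _ _ (Set.toFinite _) (Set.toFinite _)
    rw [hunion, hinter] at hsum
    have h1 : (C ∩ D ∩ S).ncard ≤ k :=
      le_trans (Set.ncard_le_ncard Set.inter_subset_left (Set.toFinite _)) hord
    have hcast : (S.ncard : ℝ) + ((C ∩ D ∩ S).ncard : ℝ)
        = ((C ∩ S).ncard : ℝ) + ((D ∩ S).ncard : ℝ) := by exact_mod_cast hsum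
    have h1' : ((C ∩ D ∩ S).ncard : ℝ) ≤ k := by exact_mod_cast h1
    nlinarith [hSk, Nat.cast_nonneg (α := ℝ) S.ncard]
  -- the heavy side of a separation is large
  have hbig : ∀ C D : Set V, IsSep G C D → ¬(α * S.ncard < ((C ∩ S).ncard : ℝ)) →
      α * S.ncard < ((D ∩ S).ncard : ℝ) → k + 1 ≤ D.ncard := by
    intro C D hsep hC hD
    by_contra hcon
    push_neg at hcon
    obtain ⟨K, hKZ, hKheavy, hKside⟩ := hcomp D (by omega)
    have hd : ∀ x ∈ K, x ∉ C ∩ D := fun x hx h' => hKZ x hx h'.2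
    rcases hKside C D hsep hd with hKC | hKD
    · exact hC (heavy_mono K C (fun x hx => (hKC hx).1) hKheavy)
    · obtain ⟨x, hxK, _⟩ := hne_of_heavy K hKheavy
      exact hKZ x hxK (hKD hxK).1
  -- the case `k = 1`
  rcases eq_or_lt_of_le hk with hk1 | hk2
  · refine ⟨∅, by rw [Set.ncard_empty]; omega, ?_⟩
    intro A B _ h2
    rw [Set.ncard_empty] at h2
    exact absurd h2 (Nat.not_lt_zero _)
  -- main case `k ≥ 2`
  set P : Set V × Set V → Prop := fun p => IsSep G p.1 p.2 ∧ (p.1 ∩ p.2).ncard + 2 ≤ k ∧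
    ¬(α * S.ncard < ((p.1 ∩ S).ncard : ℝ)) with hP
  have hPne : P (∅, Set.univ) := by
    refine ⟨⟨by simp, fun u v _ hu _ => hu.1⟩, ?_, ?_⟩
    · rw [Set.empty_inter, Set.ncard_empty]
      omega
    · rw [Set.empty_inter, Set.ncard_empty]
      push_cast
      exact not_lt.mpr hαS0
  obtain ⟨p0, hp0, hmax⟩ := Set.Finite.exists_maximalFor (fun p => p.1.ncard)
    (setOf P) (Set.toFinite _) ⟨_, hPne⟩
  obtain ⟨A, B⟩ := p0
  obtain ⟨hsepAB, hmA, hlightA⟩ := hp0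
  simp only at hsepAB hmA hlightA hmax
  -- `B` is heavy
  have hheavyB : α * S.ncard < ((B ∩ S).ncard : ℝ) := by
    obtain ⟨K, hKZ, hKheavy, hKside⟩ := hcomp (A ∩ B) (by omega)
    rcases hKside A B hsepAB (fun x hx => hKZ x hx) with h | h
    · exact absurd (heavy_mono K A (fun x hx => (h hx).1) hKheavy) hlightA
    · exact heavy_mono K B (fun x hx => (h hx).1) hKheavy
  have hBbig : k + 1 ≤ B.ncard := hbig A B hsepAB hlightA hheavyB
  -- pad `A ∩ B` with vertices of `B \ A`
  have hdiff : (B \ A).ncard + (B ∩ A).ncard = B.ncard := by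
    have h := Set.ncard_diff_add_ncard_of_subset (Set.inter_subset_left : B ∩ A ⊆ B)
      (Set.toFinite B)
    have heq : B \ (B ∩ A) = B \ A := by
      ext x
      simp only [Set.mem_diff, Set.mem_inter_iff]
      tauto
    rw [heq] at h
    exact h
  have hBAcomm : (B ∩ A).ncard = (A ∩ B).ncard := by rw [Set.inter_comm]
  obtain ⟨X, hXsub, hXcard⟩ : ∃ X ⊆ B \ A, X.ncard = k - 1 - (A ∩ B).ncard :=
    Set.exists_subset_card_eq (by omega)
  have hdisjX : Disjoint (A ∩ B) X :=
    Set.disjoint_left.mpr fun x hx hxX => (hXsub hxX).2 hx.1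
  have hFcard : ((A ∩ B) ∪ X).ncard = k - 1 := by
    rw [Set.ncard_union_eq hdisjX (Set.toFinite _) (Set.toFinite _), hXcard]
    omega
  -- the key property
  have main : ∀ C D : Set V, IsSep G C D → (C ∩ D).ncard + 2 ≤ k → (A ∩ B) ∪ X ⊆ C →
      α * S.ncard < ((C ∩ S).ncard : ℝ) := by
    intro C D hsep hord hFC
    by_contra hlight
    obtain ⟨K, hKZ, hKheavy, hKside⟩ := hcomp (C ∩ D) (by omega)
    rcases hKside C D hsep (fun x hx => hKZ x hx) with h | h
    · exact hlight (heavy_mono K C (fun x hx => (h hx).1) hKheavy)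
    have hdisjAB : ∀ x ∈ K, x ∉ A ∩ B :=
      fun x hx hxAB => (h hx).2 (hFC (Set.mem_union_left _ hxAB))
    rcases hKside A B hsepAB hdisjAB with h2 | h2
    · exact absurd (heavy_mono K A (fun x hx => (h2 hx).1) hKheavy) hlightA
    -- corner separation
    have hcorner := isSep_corner hsepAB hsep
    have hsubCD : (A ∪ C) ∩ (B ∩ D) ⊆ C ∩ D := by
      rintro x ⟨hx1, hxB, hxD⟩
      rcases hx1 with hxA | hxC
      · exact ⟨hFC (Set.mem_union_left _ ⟨hxA, hxB⟩), hxD⟩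
      · exact ⟨hxC, hxD⟩
    have hcord : ((A ∪ C) ∩ (B ∩ D)).ncard + 2 ≤ k := by
      have := Set.ncard_le_ncard hsubCD (Set.toFinite _)
      omega
    have hKBD : K ⊆ B ∩ D := fun x hx => ⟨(h2 hx).1, (h hx).1⟩
    have hheavyBD : α * S.ncard < (((B ∩ D) ∩ S).ncard : ℝ) :=
      heavy_mono K (B ∩ D) hKBD hKheavy
    have hlightAC : ¬(α * S.ncard < (((A ∪ C) ∩ S).ncard : ℝ)) :=
      fun hh => hnotboth _ _ hcorner (by omega) hh hheavyBD
    have hPnew : P (A ∪ C, B ∩ D) := ⟨hcorner, hcord, hlightAC⟩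
    obtain ⟨x0, hx0X⟩ : X.Nonempty := Set.nonempty_of_ncard_ne_zero (by omega)
    have hx0C : x0 ∈ C := hFC (Set.mem_union_right _ hx0X)
    have hx0A : x0 ∉ A := (hXsub hx0X).2
    have hlt : A.ncard < (A ∪ C).ncard :=
      Set.ncard_lt_ncard
        ((Set.ssubset_iff_of_subset Set.subset_union_left).mpr
          ⟨x0, Set.mem_union_right _ hx0C, hx0A⟩)
        (Set.toFinite _)
    have := hmax (j := (A ∪ C, B ∩ D)) hPnew (le_of_lt hlt)
    simp only at this
    omega
  refine ⟨(A ∩ B) ∪ X, hFcard, ?_⟩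
  intro C D hsep hord
  rw [hFcard] at hord
  constructor
  · intro hFC
    exact main C D hsep (by omega) hFC
  · intro hFD
    refine main D C (isSep_symm' hsep) ?_ hFD
    rw [Set.inter_comm]
    omega
end

section
/- Let k ≥ 2 be an integer, let G be a graph, and let (M, T) be an expansion of the (k × k)-grid with M a subgraph of G. Let Q be any single row or column of the (k × k)-grid and, for each vertex v of Q, choose one vertex x_v of degree at least three in M among the vertices of M representing v. Then the set S = {x_v : v ∈ V(Q)} is strongly linked in G. -/
open SimpleGraph

section Helpers

private lemma sepStep {V : Type} {G : SimpleGraph V} {A₁ A₂ : Set V}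
    (hsep : IsSep G A₁ A₂) {a c : V} (hadj : G.Adj a c)
    (ha : a ∈ A₁ \ A₂) (hc : c ∉ A₁ ∩ A₂) : c ∈ A₁ \ A₂ := by
  have hc2 : c ∉ A₂ \ A₁ := hsep.2 a c hadj ha
  have hcu : c ∈ A₁ ∪ A₂ := by rw [hsep.1]; trivial
  rcases hcu with h | h
  · exact ⟨h, fun h2 => hc ⟨h, h2⟩⟩
  · by_cases h1 : c ∈ A₁
    · exact ⟨h1, fun h2 => hc ⟨h1, h2⟩⟩
    · exact absurd ⟨h, h1⟩ hc2

private lemma walkSide {V : Type} {G : SimpleGraph V} {A₁ A₂ : Set V}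
    (hsep : IsSep G A₁ A₂) {T : Set V} (hTZ : ∀ y ∈ T, y ∉ A₁ ∩ A₂) :
    ∀ {a b : V} (w : G.Walk a b), (∀ y ∈ w.support, y ∈ T) →
      a ∈ A₁ \ A₂ → b ∈ A₁ \ A₂ := by
  intro a b w
  induction w with
  | nil => exact fun _ ha => ha
  | @cons a c b h p ih =>
    intro hsup ha
    have hc : c ∈ T := hsup c (by simp [SimpleGraph.Walk.support_cons])
    exact ih (fun y hy => hsup y (by simp [SimpleGraph.Walk.support_cons, hy]))
      (sepStep hsep h ha (hTZ c hc))

private lemma sameSide {V : Type} {G : SimpleGraph V} {M : G.Subgraph}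
    {A₁ A₂ : Set V} (hsep : IsSep G A₁ A₂) {T : Set V} (hTsub : T ⊆ M.verts)
    (hTconn : (M.coe.induce {y : M.verts | (y : V) ∈ T}).Connected)
    (hTZ : ∀ y ∈ T, y ∉ A₁ ∩ A₂)
    {a b : V} (ha : a ∈ T) (hb : b ∈ T) (haside : a ∈ A₁ \ A₂) : b ∈ A₁ \ A₂ := by
  set P : Set M.verts := {y : M.verts | (y : V) ∈ T} with hP
  have ha' : (⟨a, hTsub ha⟩ : M.verts) ∈ P := ha
  have hb' : (⟨b, hTsub hb⟩ : M.verts) ∈ P := hb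
  obtain ⟨w⟩ := hTconn.preconnected ⟨_, ha'⟩ ⟨_, hb'⟩
  let f : (M.coe.induce P) →g G := M.hom.comp (SimpleGraph.Embedding.induce P).toHom
  have hsup : ∀ y ∈ (w.map f).support, y ∈ T := by
    intro y hy
    rw [SimpleGraph.Walk.support_map, List.mem_map] at hy
    obtain ⟨z, _, rfl⟩ := hy
    exact z.2
  exact walkSide hsep hTZ (w.map f) hsup haside

private lemma gridSwap {k : ℕ} {u v : Fin k × Fin k} (h : (gridGraph k).Adj u v) :
    (gridGraph k).Adj u.swap v.swap := by
  rw [gridGraph, SimpleGraph.fromRel_adj] at h ⊢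
  obtain ⟨hne, hr⟩ := h
  refine ⟨fun he => hne (by simpa using congrArg Prod.swap he), ?_⟩
  simp only [Prod.fst_swap, Prod.snd_swap]
  tauto

private lemma aux_row (k : ℕ) (V : Type) [Finite V] (G : SimpleGraph V)
    (M : G.Subgraph) (S : Fin k × Fin k → Set V)
    (hsub : ∀ v, S v ⊆ M.verts)
    (hdisj : ∀ u v, u ≠ v → Disjoint (S u) (S v))
    (hconn : ∀ v, (M.coe.induce {x : M.verts | (x : V) ∈ S v}).Connected)
    (hedges : ∀ u v, (gridGraph k).Adj u v → ∃ x ∈ S u, ∃ y ∈ S v, M.Adj x y)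
    (i : Fin k) (x : Fin k × Fin k → V)
    (hx : ∀ v : Fin k × Fin k, v.1 = i → x v ∈ S v) :
    StronglyLinked G (x '' {p | p.1 = i}) := by
  intro S₁ S₂ hunion hdisjS hne₁ hne₂ A₁ A₂ hsep hS₁A hS₂A
  by_contra hcon
  push_neg at hcon
  set Z : Set V := A₁ ∩ A₂ with hZ
  set Q : Set (Fin k × Fin k) := {p | p.1 = i} with hQdef
  have hxQ : ∀ v ∈ Q, x v ∈ S v := fun v hv => hx v hv
  have hxInj : Set.InjOn x Q := by
    intro u hu v hv he
    by_contra hne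
    exact Set.disjoint_left.mp (hdisj u v hne) (hxQ u hu) (he ▸ hxQ v hv)
  set W : Set (Fin k × Fin k) := {v | (S v ∩ Z).Nonempty} with hW
  -- |W| ≤ |Z|
  have hWcard : W.ncard ≤ Z.ncard := by
    have hch : ∀ w : Fin k × Fin k, ∃ z : V, w ∈ W → z ∈ S w ∩ Z := by
      intro w
      by_cases hw : w ∈ W
      · exact ⟨hw.some, fun _ => hw.some_mem⟩
      · exact ⟨hne₁.some, fun h => absurd h hw⟩
    choose g hg using hch
    have hinj : Set.InjOn g W := by
      intro u hu v hv he
      by_contra hne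
      exact Set.disjoint_left.mp (hdisj u v hne) (hg u hu).1 (he ▸ (hg v hv).1)
    calc W.ncard = (g '' W).ncard := (Set.ncard_image_of_injOn hinj).symm
      _ ≤ Z.ncard := Set.ncard_le_ncard
          (by rintro _ ⟨w, hw, rfl⟩; exact (hg w hw).2) (Set.toFinite _)
  set Q₁ : Set (Fin k × Fin k) := {v | v ∈ Q ∧ x v ∈ S₁} with hQ₁
  set Q₂ : Set (Fin k × Fin k) := {v | v ∈ Q ∧ x v ∈ S₂} with hQ₂
  have hS₁eq : S₁ = x '' Q₁ := by
    ext s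
    constructor
    · intro hs
      have : s ∈ x '' Q := hunion ▸ Set.mem_union_left _ hs
      obtain ⟨v, hv, rfl⟩ := this
      exact ⟨v, ⟨hv, hs⟩, rfl⟩
    · rintro ⟨v, hv, rfl⟩; exact hv.2
  have hS₂eq : S₂ = x '' Q₂ := by
    ext s
    constructor
    · intro hs
      have : s ∈ x '' Q := hunion ▸ Set.mem_union_right _ hs
      obtain ⟨v, hv, rfl⟩ := this
      exact ⟨v, ⟨hv, hs⟩, rfl⟩
    · rintro ⟨v, hv, rfl⟩; exact hv.2
  have hc₁ : S₁.ncard = Q₁.ncard := by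
    rw [hS₁eq]; exact Set.ncard_image_of_injOn (hxInj.mono fun v hv => hv.1)
  have hc₂ : S₂.ncard = Q₂.ncard := by
    rw [hS₂eq]; exact Set.ncard_image_of_injOn (hxInj.mono fun v hv => hv.1)
  have hQcard : Q.ncard = k := by
    have hq : Q = (fun c : Fin k => ((i, c) : Fin k × Fin k)) '' Set.univ := by
      ext p
      constructor
      · intro hp
        exact ⟨p.2, trivial, Prod.ext (show (i, p.2).1 = p.1 from (id hp).symm) rfl⟩
      · rintro ⟨c, _, rfl⟩; exact rfl
    rw [hq, Set.ncard_image_of_injOn (fun a _ b _ h => congrArg Prod.snd h)]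
    simp [Set.ncard_univ]
  have hmin₁ : min S₁.ncard S₂.ncard ≤ Q₁.ncard := hc₁ ▸ min_le_left _ _
  have hmin₂ : min S₁.ncard S₂.ncard ≤ Q₂.ncard := hc₂ ▸ min_le_right _ _
  -- a W-free row
  have hrow : ∃ r₀ : Fin k, ∀ c, (r₀, c) ∉ W := by
    by_contra h
    push_neg at h
    have huniv : (Set.univ : Set (Fin k)) ⊆ Prod.fst '' W := by
      intro r _
      obtain ⟨c, hc⟩ := h r
      exact ⟨(r, c), hc, rfl⟩
    have h1 : k ≤ W.ncard := by
      calc k = (Set.univ : Set (Fin k)).ncard := by simp [Set.ncard_univ]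
        _ ≤ (Prod.fst '' W).ncard := Set.ncard_le_ncard huniv (Set.toFinite _)
        _ ≤ W.ncard := Set.ncard_image_le (Set.toFinite _)
    have h2 : Q₁.ncard ≤ k := by
      calc Q₁.ncard ≤ Q.ncard := Set.ncard_le_ncard (fun v hv => hv.1) (Set.toFinite _)
        _ = k := hQcard
    have h3 : Z.ncard < S₁.ncard :=
      lt_of_lt_of_le hcon (min_le_left _ _)
    omega
  obtain ⟨r₀, hr₀free⟩ := hrow
  -- a W-free column through each of Q₁, Q₂
  have hcolpick : ∀ T : Set (Fin k × Fin k), T ⊆ Q →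
      min S₁.ncard S₂.ncard ≤ T.ncard → ∃ v ∈ T, ∀ r, (r, v.2) ∉ W := by
    intro T hTQ hTcard
    by_contra h
    push_neg at h
    have hsubW : Prod.snd '' T ⊆ Prod.snd '' W := by
      rintro _ ⟨v, hv, rfl⟩
      obtain ⟨r, hr⟩ := h v hv
      exact ⟨(r, v.2), hr, rfl⟩
    have hTinj : Set.InjOn Prod.snd T := by
      intro u hu v hv he
      have h1 : u.1 = i := hTQ hu
      have h2 : v.1 = i := hTQ hv
      exact Prod.ext (h1.trans h2.symm) he
    have h4 : T.ncard ≤ W.ncard := by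
      calc T.ncard = (Prod.snd '' T).ncard := (Set.ncard_image_of_injOn hTinj).symm
        _ ≤ (Prod.snd '' W).ncard := Set.ncard_le_ncard hsubW (Set.toFinite _)
        _ ≤ W.ncard := Set.ncard_image_le (Set.toFinite _)
    have h5 := hTcard.trans h4
    have h6 := h5.trans hWcard
    exact absurd hcon (not_lt.mpr h6)
  obtain ⟨v₁, hv₁, hfree₁⟩ := hcolpick Q₁ (fun v hv => hv.1) hmin₁
  obtain ⟨v₂, hv₂, hfree₂⟩ := hcolpick Q₂ (fun v hv => hv.1) hmin₂
  -- connectivity machinery inside the grid avoiding W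
  set R : (Fin k × Fin k) → (Fin k × Fin k) → Prop :=
    fun u v => (gridGraph k).Adj u v ∧ u ∉ W ∧ v ∉ W with hRdef
  have hRsymm : Symmetric R := fun u v h => ⟨h.1.symm, h.2.2, h.2.1⟩
  set Conn := Relation.ReflTransGen R with hConn
  have kpos : 0 < k := i.pos
  have connCol : ∀ c : Fin k, (∀ r, (r, c) ∉ W) → ∀ a b : Fin k,
      Conn (a, c) (b, c) := by
    intro c hfree
    have base : ∀ n (hn : n < k), Conn (⟨0, kpos⟩, c) (⟨n, hn⟩, c) := by
      intro n
      induction n with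
      | zero => exact fun hn => Relation.ReflTransGen.refl
      | succ m ih =>
        intro hn
        have hm : m < k := Nat.lt_of_succ_lt hn
        refine (ih hm).tail ⟨?_, hfree _, hfree _⟩
        rw [gridGraph, SimpleGraph.fromRel_adj]
        refine ⟨?_, Or.inl (Or.inr ⟨rfl, rfl⟩)⟩
        intro he
        have := congrArg (fun p : Fin k × Fin k => (p.1 : ℕ)) he
        simp at this
    intro a b
    have ha := base (a : ℕ) a.isLt
    have hb := base (b : ℕ) b.isLt
    simp only [Fin.eta] at ha hb
    exact ((@Relation.ReflTransGen.symmetric _ R ⟨hRsymm⟩).symm _ _ ha).trans hb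
  have connRow : ∀ r : Fin k, (∀ c, (r, c) ∉ W) → ∀ a b : Fin k,
      Conn (r, a) (r, b) := by
    intro r hfree
    have base : ∀ n (hn : n < k), Conn (r, ⟨0, kpos⟩) (r, ⟨n, hn⟩) := by
      intro n
      induction n with
      | zero => exact fun hn => Relation.ReflTransGen.refl
      | succ m ih =>
        intro hn
        have hm : m < k := Nat.lt_of_succ_lt hn
        refine (ih hm).tail ⟨?_, hfree _, hfree _⟩
        rw [gridGraph, SimpleGraph.fromRel_adj]
        refine ⟨?_, Or.inl (Or.inl ⟨rfl, rfl⟩)⟩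
        intro he
        have := congrArg (fun p : Fin k × Fin k => (p.2 : ℕ)) he
        simp at this
    intro a b
    have ha := base (a : ℕ) a.isLt
    have hb := base (b : ℕ) b.isLt
    simp only [Fin.eta] at ha hb
    exact ((@Relation.ReflTransGen.symmetric _ R ⟨hRsymm⟩).symm _ _ ha).trans hb
  -- propagation of sides
  have hnotW : ∀ v : Fin k × Fin k, v ∉ W → ∀ y ∈ S v, y ∉ Z := by
    intro v hv y hy hyZ
    exact hv ⟨y, hy, hyZ⟩
  have hgoodstep : ∀ u v, R u v → S u ⊆ A₁ \ A₂ → S v ⊆ A₁ \ A₂ := by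
    rintro u v ⟨hadj, hu, hv⟩ hgu
    obtain ⟨a, hau, b, hbv, hab⟩ := hedges u v hadj
    have hb' : b ∈ A₁ \ A₂ := sepStep hsep hab.adj_sub (hgu hau) (hnotW v hv b hbv)
    intro y hy
    exact sameSide hsep (hsub v) (hconn v) (hnotW v hv) hbv hy hb'
  have hprop : ∀ u v, Conn u v → S u ⊆ A₁ \ A₂ → S v ⊆ A₁ \ A₂ := by
    intro u v h
    induction h with
    | refl => exact id
    | tail _ hstep ih => exact fun hu => hgoodstep _ _ hstep (ih hu)
  -- start
  have hv₁eq : v₁ = ((i, v₁.2) : Fin k × Fin k) := Prod.ext hv₁.1 rfl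
  have hv₂eq : v₂ = ((i, v₂.2) : Fin k × Fin k) := Prod.ext hv₂.1 rfl
  have hv₁W : v₁ ∉ W := by rw [hv₁eq]; exact hfree₁ i
  have hv₂W : v₂ ∉ W := by rw [hv₂eq]; exact hfree₂ i
  have hx₁side : x v₁ ∈ A₁ \ A₂ := by
    refine ⟨hS₁A hv₁.2, fun h2 => ?_⟩
    exact hnotW v₁ hv₁W (x v₁) (hxQ v₁ hv₁.1) ⟨hS₁A hv₁.2, h2⟩
  have hgood₁ : S v₁ ⊆ A₁ \ A₂ := fun y hy =>
    sameSide hsep (hsub v₁) (hconn v₁) (hnotW v₁ hv₁W) (hxQ v₁ hv₁.1) hy hx₁side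
  have hconn12 : Conn v₁ v₂ := by
    rw [hv₁eq, hv₂eq]
    exact ((connCol v₁.2 hfree₁ i r₀).trans (connRow r₀ hr₀free v₁.2 v₂.2)).trans
      (connCol v₂.2 hfree₂ r₀ i)
  have hgood₂ : S v₂ ⊆ A₁ \ A₂ := hprop v₁ v₂ hconn12 hgood₁
  exact (hgood₂ (hxQ v₂ hv₂.1)).2 (hS₂A hv₂.2)

end Helpers

/-- Observation 3.9: a representative set of a row or column of a grid
expansion is strongly linked. -/
theorem representative_set_stronglyLinked
    (k : ℕ) (hk : 2 ≤ k) (V : Type) [Finite V] (G : SimpleGraph V)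
    (M : G.Subgraph) (S : Fin k × Fin k → Set V)
    (hsub : ∀ v, S v ⊆ M.verts)
    (hcover : (⋃ v, S v) = M.verts)
    (hdisj : ∀ u v, u ≠ v → Disjoint (S u) (S v))
    (hconn : ∀ v, (M.coe.induce {x : M.verts | (x : V) ∈ S v}).Connected)
    (hedges : ∀ u v, (gridGraph k).Adj u v → ∃ x ∈ S u, ∃ y ∈ S v, M.Adj x y)
    (Q : Set (Fin k × Fin k))
    (hQ : (∃ i, Q = {p | p.1 = i}) ∨ (∃ j, Q = {p | p.2 = j}))
    (x : Fin k × Fin k → V)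
    (hx : ∀ v ∈ Q, x v ∈ S v)
    (hdeg : ∀ v ∈ Q, 3 ≤ (M.neighborSet (x v)).ncard) :
    StronglyLinked G (x '' Q) := by
  rcases hQ with ⟨i, rfl⟩ | ⟨j, rfl⟩
  · exact aux_row k V G M S hsub hdisj hconn hedges i x hx
  · have h := aux_row k V G M (fun v => S v.swap) (fun v => hsub v.swap)
      (fun u v huv => hdisj u.swap v.swap
        (fun he => huv (by simpa using congrArg Prod.swap he)))
      (fun v => hconn v.swap)
      (fun u v huv => hedges u.swap v.swap (gridSwap huv))
      j (fun v => x v.swap)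
      (fun v hv => hx v.swap hv)
    have himg : (fun v : Fin k × Fin k => x v.swap) '' {p | p.1 = j}
        = x '' {p | p.2 = j} := by
      ext y
      constructor
      · rintro ⟨v, hv, rfl⟩
        exact ⟨v.swap, hv, rfl⟩
      · rintro ⟨v, hv, rfl⟩
        exact ⟨v.swap, hv, by simp⟩
    rwa [himg] at h
end

section
/- There is a universal constant c such that for every integer t ≥ 1 and every graph G that contains a crossed t-grid as a subgraph, it holds that t ≤ c · (hw(G))². -/
open SimpleGraph

section Aux

/-- Any `m` with a `K_m` minor is at most the number of vertices. -/
lemma isMinor_top_le {V : Type} [Finite V] (G : SimpleGraph V) (m : ℕ)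
    (h : ∃ S : Fin m → Set V,
      (∀ a, (G.induce (S a)).Connected) ∧
      (∀ a b, a ≠ b → Disjoint (S a) (S b)) ∧
      (∀ a b, (⊤ : SimpleGraph (Fin m)).Adj a b → ∃ x ∈ S a, ∃ y ∈ S b, G.Adj x y)) :
    m ≤ Nat.card V := by
  obtain ⟨S, hconn, hdisj, -⟩ := h
  have hne : ∀ a, (S a).Nonempty := fun a => by
    have := (hconn a).nonempty
    obtain ⟨⟨x, hx⟩⟩ := this
    exact ⟨x, hx⟩
  choose g hg using hne
  have hginj : Function.Injective g := by
    intro a b hab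
    by_contra hne'
    exact (hdisj a b hne').ne_of_mem (hg a) (hg b) hab
  simpa using Nat.card_le_card_of_injective g hginj

variable {t n : ℕ} {K : SimpleGraph (Fin n)}

/-- last-edge extraction -/
lemma exists_edge_end {a b : Fin n} (W : K.Walk a b) (h : a ≠ b) :
    ∃ x, s(b, x) ∈ W.edges := by
  obtain ⟨w, hadj, q, hq⟩ := Walk.exists_eq_cons_of_ne (Ne.symm h) W.reverse
  refine ⟨w, ?_⟩
  have : s(b, w) ∈ W.reverse.edges := by rw [hq]; simp
  rwa [Walk.edges_reverse, List.mem_reverse] at this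

lemma exists_edge_start {a b : Fin n} (W : K.Walk a b) (h : a ≠ b) :
    ∃ x, s(a, x) ∈ W.edges := by
  obtain ⟨w, hadj, q, hq⟩ := Walk.exists_eq_cons_of_ne h W
  exact ⟨w, by rw [hq]; simp⟩

lemma reach_of_share (E : Set (Sym2 (Fin n))) (e e' : K.edgeSet)
    (he : (e : Sym2 (Fin n)) ∈ E) (he' : (e' : Sym2 (Fin n)) ∈ E) (x : Fin n)
    (hx : x ∈ (e : Sym2 (Fin n))) (hx' : x ∈ (e' : Sym2 (Fin n))) :
    ((lineGraph' K).induce {z : K.edgeSet | (z : Sym2 (Fin n)) ∈ E}).Reachable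
      ⟨e, he⟩ ⟨e', he'⟩ := by
  by_cases h : e = e'
  · subst h; exact Reachable.refl _
  · apply Adj.reachable
    show (lineGraph' K).Adj e e'
    rw [lineGraph', fromRel_adj]
    exact ⟨h, Or.inl ⟨x, hx, hx'⟩⟩

lemma walk_reach (E : Set (Sym2 (Fin n))) :
    ∀ {a b : Fin n} (W : K.Walk a b), (∀ e ∈ W.edges, e ∈ E) →
    ∀ (e : K.edgeSet) (he' : (e : Sym2 (Fin n)) ∈ E), (e : Sym2 (Fin n)) ∈ W.edges →
    ∀ (e₀ : K.edgeSet) (h0 : (e₀ : Sym2 (Fin n)) ∈ E), a ∈ (e₀ : Sym2 (Fin n)) →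
    ((lineGraph' K).induce {z : K.edgeSet | (z : Sym2 (Fin n)) ∈ E}).Reachable
      ⟨e, he'⟩ ⟨e₀, h0⟩ := by
  intro a b W
  induction W with
  | nil => intro _ e _ he; simp at he
  | @cons u v w hadj W' ih =>
    intro hW e he' he e₀ h0 ha
    rw [Walk.edges_cons, List.mem_cons] at he
    rcases he with he | he
    · refine reach_of_share E e e₀ he' h0 u ?_ ha
      rw [he]; exact Sym2.mem_mk_left u v
    · have hW' : ∀ z ∈ W'.edges, z ∈ E := fun z hz => hW z (by simp [hz])
      have hmemE : s(u, v) ∈ E := hW _ (by simp)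
      have h1 := ih hW' e he' he ⟨s(u,v), hadj⟩ hmemE (Sym2.mem_mk_right u v)
      exact h1.trans (reach_of_share E ⟨s(u,v), hadj⟩ e₀ hmemE h0 u
        (Sym2.mem_mk_left u v) ha)

end Aux

section Walks

variable {t n : ℕ} {K : SimpleGraph (Fin n)} {f : Fin (t+2) × Fin (t+2) → Fin n}
variable {p : ∀ u v, (crossedPre t).Adj u v → K.Walk (f u) (f v)}

/-- Distinct edges of the pattern graph give edge-disjoint paths. -/
lemma path_edges_disjoint (hemb : IsSubdivEmbed (crossedPre t) K f p)
    {u v u' v' : Fin (t+2) × Fin (t+2)} (h : (crossedPre t).Adj u v)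
    (h' : (crossedPre t).Adj u' v') (hne : s(u,v) ≠ s(u',v'))
    {e : Sym2 (Fin n)} (he : e ∈ (p u v h).edges) (he' : e ∈ (p u' v' h').edges) :
    False := by
  induction e with
  | _ x y =>
    have hxy : x ≠ y := ((p u v h).adj_of_mem_edges he).ne
    have hx : x ∈ (p u v h).support := (p u v h).fst_mem_support_of_mem_edges he
    have hy : y ∈ (p u v h).support := (p u v h).snd_mem_support_of_mem_edges he
    have hx' : x ∈ (p u' v' h').support := (p u' v' h').fst_mem_support_of_mem_edges he'
    have hy' : y ∈ (p u' v' h').support := (p u' v' h').snd_mem_support_of_mem_edges he'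
    obtain ⟨cx, cx'⟩ := hemb.2.2.2.2 u v u' v' h h' hne x hx hx'
    obtain ⟨cy, cy'⟩ := hemb.2.2.2.2 u v u' v' h h' hne y hy hy'
    have finj := hemb.1
    have hm1 : x ∈ s(f u, f v) := by rcases cx with h1 | h1 <;> simp [h1]
    have hm2 : y ∈ s(f u, f v) := by rcases cy with h1 | h1 <;> simp [h1]
    have hm1' : x ∈ s(f u', f v') := by rcases cx' with h1 | h1 <;> simp [h1]
    have hm2' : y ∈ s(f u', f v') := by rcases cy' with h1 | h1 <;> simp [h1]
    have e1 : s(f u, f v) = s(x, y) := (Sym2.mem_and_mem_iff hxy).1 ⟨hm1, hm2⟩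
    have e2 : s(f u', f v') = s(x, y) := (Sym2.mem_and_mem_iff hxy).1 ⟨hm1', hm2'⟩
    have e3 : s(f u, f v) = s(f u', f v') := e1.trans e2.symm
    rw [Sym2.eq_iff] at e3
    apply hne
    rw [Sym2.eq_iff]
    rcases e3 with ⟨h1, h2⟩ | ⟨h1, h2⟩
    · exact Or.inl ⟨finj h1, finj h2⟩
    · exact Or.inr ⟨finj h1, finj h2⟩

lemma adjRow (ht : 1 ≤ t) (r a : ℕ) (hr1 : 1 ≤ r) (hr2 : r ≤ t) (ha : a + 1 ≤ t + 1) :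
    (crossedPre t).Adj (⟨r, by omega⟩, ⟨a, by omega⟩) (⟨r, by omega⟩, ⟨a+1, by omega⟩) := by
  rw [crossedPre, fromRel_adj]
  constructor
  · intro hcon
    rw [Prod.ext_iff] at hcon
    have := hcon.2
    rw [Fin.ext_iff] at this
    simp at this
  · left
    refine ⟨Or.inl ⟨rfl, rfl⟩, ?_⟩
    rcases Nat.lt_or_ge a 1 with h1 | h1
    · right
      refine ⟨by simp; omega, by simpa using Nat.lt_succ_of_le hr2, by simp, ?_⟩
      simp only [gridInterior]
      omega
    · left
      exact ⟨by simp; omega, by simpa using Nat.lt_succ_of_le hr2, by simp; omega, by simp; omega⟩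

lemma adjCol (ht : 1 ≤ t) (c a : ℕ) (hc1 : 1 ≤ c) (hc2 : c ≤ t) (ha : a + 1 ≤ t + 1) :
    (crossedPre t).Adj (⟨a, by omega⟩, ⟨c, by omega⟩) (⟨a+1, by omega⟩, ⟨c, by omega⟩) := by
  rw [crossedPre, fromRel_adj]
  constructor
  · intro hcon
    rw [Prod.ext_iff] at hcon
    have := hcon.1
    rw [Fin.ext_iff] at this
    simp at this
  · left
    refine ⟨Or.inr ⟨rfl, rfl⟩, ?_⟩
    rcases Nat.lt_or_ge a 1 with h1 | h1
    · right
      simp only [gridInterior, Fin.val_mk]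
      omega
    · left
      simp only [gridInterior, Fin.val_mk]
      omega

end Walks

section WalkDefs

variable {t n : ℕ} (K : SimpleGraph (Fin n)) (f : Fin (t+2) × Fin (t+2) → Fin n)
  (p : ∀ u v, (crossedPre t).Adj u v → K.Walk (f u) (f v))

def rowW (ht : 1 ≤ t) (r : ℕ) (hr1 : 1 ≤ r) (hr2 : r ≤ t) :
    ∀ (j : ℕ) (hj : j ≤ t + 1),
      K.Walk (f (⟨r, by omega⟩, ⟨0, by omega⟩)) (f (⟨r, by omega⟩, ⟨j, by omega⟩))
  | 0, _ => Walk.nil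
  | (j+1), hj =>
      (rowW ht r hr1 hr2 j (by omega)).append (p _ _ (adjRow ht r j hr1 hr2 hj))

def colW (ht : 1 ≤ t) (c : ℕ) (hc1 : 1 ≤ c) (hc2 : c ≤ t) :
    ∀ (j : ℕ) (hj : j ≤ t + 1),
      K.Walk (f (⟨0, by omega⟩, ⟨c, by omega⟩)) (f (⟨j, by omega⟩, ⟨c, by omega⟩))
  | 0, _ => Walk.nil
  | (j+1), hj =>
      (colW ht c hc1 hc2 j (by omega)).append (p _ _ (adjCol ht c j hc1 hc2 hj))

lemma rowW_mono (ht : 1 ≤ t) (r : ℕ) (hr1 : 1 ≤ r) (hr2 : r ≤ t) (j : ℕ) :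
    ∀ (j' : ℕ) (hj : j ≤ t + 1) (hj' : j' ≤ t + 1), j ≤ j' →
    ∀ e ∈ (rowW K f p ht r hr1 hr2 j hj).edges, e ∈ (rowW K f p ht r hr1 hr2 j' hj').edges := by
  intro j'
  induction j' with
  | zero =>
      intro hj hj' hle e he
      obtain rfl : j = 0 := by omega
      exact he
  | succ j' ih =>
      intro hj hj' hle e he
      rcases Nat.lt_or_ge j (j'+1) with h | h
      · have : e ∈ (rowW K f p ht r hr1 hr2 j' (by omega)).edges :=
          ih hj (by omega) (by omega) e he
        show e ∈ ((rowW K f p ht r hr1 hr2 j' (by omega)).append _).edges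
        rw [Walk.edges_append]
        exact List.mem_append_left _ this
      · obtain rfl : j = j' + 1 := by omega
        exact he

end WalkDefs

section WalkLemmas

variable {t n : ℕ} (K : SimpleGraph (Fin n)) (f : Fin (t+2) × Fin (t+2) → Fin n)
  (p : ∀ u v, (crossedPre t).Adj u v → K.Walk (f u) (f v))

lemma colW_mono (ht : 1 ≤ t) (c : ℕ) (hc1 : 1 ≤ c) (hc2 : c ≤ t) (j : ℕ) :
    ∀ (j' : ℕ) (hj : j ≤ t + 1) (hj' : j' ≤ t + 1), j ≤ j' →
    ∀ e ∈ (colW K f p ht c hc1 hc2 j hj).edges, e ∈ (colW K f p ht c hc1 hc2 j' hj').edges := by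
  intro j'
  induction j' with
  | zero =>
      intro hj hj' hle e he
      obtain rfl : j = 0 := by omega
      exact he
  | succ j' ih =>
      intro hj hj' hle e he
      rcases Nat.lt_or_ge j (j'+1) with h | h
      · have : e ∈ (colW K f p ht c hc1 hc2 j' (by omega)).edges :=
          ih hj (by omega) (by omega) e he
        show e ∈ ((colW K f p ht c hc1 hc2 j' (by omega)).append _).edges
        rw [Walk.edges_append]
        exact List.mem_append_left _ this
      · obtain rfl : j = j' + 1 := by omega
        exact he

lemma rowW_char (ht : 1 ≤ t) (r : ℕ) (hr1 : 1 ≤ r) (hr2 : r ≤ t) (j : ℕ) :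
    ∀ (hj : j ≤ t + 1), ∀ e ∈ (rowW K f p ht r hr1 hr2 j hj).edges,
      ∃ u v, ∃ h : (crossedPre t).Adj u v,
        (u.1 : ℕ) = r ∧ (v.1 : ℕ) = r ∧ (u.2 : ℕ) + 1 = (v.2 : ℕ) ∧ e ∈ (p u v h).edges := by
  induction j with
  | zero => intro hj e he; simp [rowW] at he
  | succ j ih =>
      intro hj e he
      have he' : e ∈ ((rowW K f p ht r hr1 hr2 j (by omega)).append
          (p _ _ (adjRow ht r j hr1 hr2 hj))).edges := he
      rw [Walk.edges_append, List.mem_append] at he'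
      rcases he' with h1 | h1
      · exact ih (by omega) e h1
      · exact ⟨_, _, adjRow ht r j hr1 hr2 hj, rfl, rfl, rfl, h1⟩

lemma colW_char (ht : 1 ≤ t) (c : ℕ) (hc1 : 1 ≤ c) (hc2 : c ≤ t) (j : ℕ) :
    ∀ (hj : j ≤ t + 1), ∀ e ∈ (colW K f p ht c hc1 hc2 j hj).edges,
      ∃ u v, ∃ h : (crossedPre t).Adj u v,
        (u.2 : ℕ) = c ∧ (v.2 : ℕ) = c ∧ (u.1 : ℕ) + 1 = (v.1 : ℕ) ∧ e ∈ (p u v h).edges := by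
  induction j with
  | zero => intro hj e he; simp [colW] at he
  | succ j ih =>
      intro hj e he
      have he' : e ∈ ((colW K f p ht c hc1 hc2 j (by omega)).append
          (p _ _ (adjCol ht c j hc1 hc2 hj))).edges := he
      rw [Walk.edges_append, List.mem_append] at he'
      rcases he' with h1 | h1
      · exact ih (by omega) e h1
      · exact ⟨_, _, adjCol ht c j hc1 hc2 hj, rfl, rfl, rfl, h1⟩

lemma row_row_ne {r r' : ℕ} {u v u' v' : Fin (t+2) × Fin (t+2)}
    (h1 : (u.1 : ℕ) = r) (h2 : (v.1 : ℕ) = r) (h3 : (u.2 : ℕ) + 1 = (v.2 : ℕ))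
    (h1' : (u'.1 : ℕ) = r') (h2' : (v'.1 : ℕ) = r') (hrr : r ≠ r') :
    s(u, v) ≠ s(u', v') := by
  intro hcon
  rw [Sym2.eq_iff] at hcon
  rcases hcon with ⟨rfl, rfl⟩ | ⟨rfl, rfl⟩ <;> omega

lemma col_col_ne {c c' : ℕ} {u v u' v' : Fin (t+2) × Fin (t+2)}
    (h1 : (u.2 : ℕ) = c) (h2 : (v.2 : ℕ) = c) (h3 : (u.1 : ℕ) + 1 = (v.1 : ℕ))
    (h1' : (u'.2 : ℕ) = c') (h2' : (v'.2 : ℕ) = c') (hcc : c ≠ c') :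
    s(u, v) ≠ s(u', v') := by
  intro hcon
  rw [Sym2.eq_iff] at hcon
  rcases hcon with ⟨rfl, rfl⟩ | ⟨rfl, rfl⟩ <;> omega

lemma row_col_ne {r : ℕ} {u v u' v' : Fin (t+2) × Fin (t+2)}
    (h1 : (u.1 : ℕ) = r) (h2 : (v.1 : ℕ) = r) (h' : (u'.1 : ℕ) + 1 = (v'.1 : ℕ)) :
    s(u, v) ≠ s(u', v') := by
  intro hcon
  rw [Sym2.eq_iff] at hcon
  rcases hcon with ⟨rfl, rfl⟩ | ⟨rfl, rfl⟩ <;> omega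

end WalkLemmas

section MainConstr

variable {t n : ℕ} (K : SimpleGraph (Fin n)) (f : Fin (t+2) × Fin (t+2) → Fin n)
  (p : ∀ u v, (crossedPre t).Adj u v → K.Walk (f u) (f v))

def rowWalk (ht : 1 ≤ t) (i : Fin t) :=
  rowW K f p ht (i.val+1) (Nat.le_add_left 1 _) i.isLt (t+1) le_rfl

def colWalk (ht : 1 ≤ t) (i : Fin t) :=
  colW K f p ht (i.val+1) (Nat.le_add_left 1 _) i.isLt (t+1) le_rfl

def crossE (ht : 1 ≤ t) (i : Fin t) : Set (Sym2 (Fin n)) :=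
  {s | s ∈ (rowWalk K f p ht i).edges ∨ s ∈ (colWalk K f p ht i).edges}

lemma crossE_char (ht : 1 ≤ t) (i : Fin t) {s : Sym2 (Fin n)}
    (hs : s ∈ crossE K f p ht i) :
    ∃ u v, ∃ h : (crossedPre t).Adj u v, s ∈ (p u v h).edges ∧
      (((u.1 : ℕ) = i.val + 1 ∧ (v.1 : ℕ) = i.val + 1 ∧ (u.2 : ℕ) + 1 = (v.2 : ℕ)) ∨
       ((u.2 : ℕ) = i.val + 1 ∧ (v.2 : ℕ) = i.val + 1 ∧ (u.1 : ℕ) + 1 = (v.1 : ℕ))) := by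
  rcases hs with h1 | h1
  · obtain ⟨u, v, h, e1, e2, e3, hm⟩ :=
      rowW_char K f p ht (i.val+1) (Nat.le_add_left 1 _) i.isLt (t+1) le_rfl s h1
    exact ⟨u, v, h, hm, Or.inl ⟨e1, e2, e3⟩⟩
  · obtain ⟨u, v, h, e1, e2, e3, hm⟩ :=
      colW_char K f p ht (i.val+1) (Nat.le_add_left 1 _) i.isLt (t+1) le_rfl s h1
    exact ⟨u, v, h, hm, Or.inr ⟨e1, e2, e3⟩⟩

lemma crossE_disjoint (hemb : IsSubdivEmbed (crossedPre t) K f p) (ht : 1 ≤ t)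
    {i j : Fin t} (hij : i ≠ j) {s : Sym2 (Fin n)}
    (hi : s ∈ crossE K f p ht i) (hj : s ∈ crossE K f p ht j) : False := by
  have hv : (i : ℕ) ≠ (j : ℕ) := fun h => hij (Fin.ext h)
  obtain ⟨u, v, h, hm, hc⟩ := crossE_char K f p ht i hi
  obtain ⟨u', v', h', hm', hc'⟩ := crossE_char K f p ht j hj
  rcases hc with ⟨e1, e2, e3⟩ | ⟨e1, e2, e3⟩ <;> rcases hc' with ⟨e1', e2', e3'⟩ | ⟨e1', e2', e3'⟩
  · exact path_edges_disjoint hemb h h' (row_row_ne e1 e2 e3 e1' e2' (by omega)) hm hm'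
  · exact path_edges_disjoint hemb h h' (row_col_ne e1 e2 e3') hm hm'
  · exact path_edges_disjoint hemb h h' (Ne.symm (row_col_ne e1' e2' e3)) hm hm'
  · exact path_edges_disjoint hemb h h' (col_col_ne e1 e2 e3 e1' e2' (by omega)) hm hm'

lemma cross_minor (ht : 1 ≤ t) (hemb : IsSubdivEmbed (crossedPre t) K f p)
    {V : Type} (G : SimpleGraph V) (φ : K.edgeSet → V) (hφinj : Function.Injective φ)
    (hφadj : ∀ e e', (lineGraph' K).Adj e e' → G.Adj (φ e) (φ e')) :
    IsMinor (⊤ : SimpleGraph (Fin t)) G := by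
  classical
  have finj : Function.Injective f := hemb.1
  refine ⟨fun i => φ '' {e : K.edgeSet | (e : Sym2 (Fin n)) ∈ crossE K f p ht i}, ?_, ?_, ?_⟩
  · -- connectivity of each branch set
    intro i
    set E : Set (Sym2 (Fin n)) := crossE K f p ht i with hE
    -- the edge of the row walk ending at the centre
    have hne1 : f (⟨i.val+1, by omega⟩, ⟨0, by omega⟩) ≠
        f (⟨i.val+1, by omega⟩, ⟨i.val+1, by omega⟩) := by
      intro hcon
      have := finj hcon
      rw [Prod.ext_iff] at this
      have h2 := this.2
      rw [Fin.ext_iff] at h2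
      simp at h2
    obtain ⟨x, hx⟩ := exists_edge_end
      (rowW K f p ht (i.val+1) (Nat.le_add_left 1 _) i.isLt (i.val+1) (by omega)) hne1
    have hxrow : s(f (⟨i.val+1, by omega⟩, ⟨i.val+1, by omega⟩), x) ∈
        (rowWalk K f p ht i).edges :=
      rowW_mono K f p ht (i.val+1) (Nat.le_add_left 1 _) i.isLt (i.val+1) (t+1)
        (by omega) le_rfl (by omega) _ hx
    -- the edge of the column walk ending at the centre
    have hne2 : f (⟨0, by omega⟩, ⟨i.val+1, by omega⟩) ≠
        f (⟨i.val+1, by omega⟩, ⟨i.val+1, by omega⟩) := by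
      intro hcon
      have := finj hcon
      rw [Prod.ext_iff] at this
      have h2 := this.1
      rw [Fin.ext_iff] at h2
      simp at h2
    obtain ⟨y, hy⟩ := exists_edge_end
      (colW K f p ht (i.val+1) (Nat.le_add_left 1 _) i.isLt (i.val+1) (by omega)) hne2
    have hycol : s(f (⟨i.val+1, by omega⟩, ⟨i.val+1, by omega⟩), y) ∈
        (colWalk K f p ht i).edges :=
      colW_mono K f p ht (i.val+1) (Nat.le_add_left 1 _) i.isLt (i.val+1) (t+1)
        (by omega) le_rfl (by omega) _ hy
    set er : K.edgeSet := ⟨_, (rowWalk K f p ht i).edges_subset_edgeSet hxrow⟩ with her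
    have hEr : (er : Sym2 (Fin n)) ∈ E := Or.inl hxrow
    set ec : K.edgeSet := ⟨_, (colWalk K f p ht i).edges_subset_edgeSet hycol⟩ with hec
    have hEc : (ec : Sym2 (Fin n)) ∈ E := Or.inr hycol
    -- the hom from the induced line graph
    let ψ : ((lineGraph' K).induce {z : K.edgeSet | (z : Sym2 (Fin n)) ∈ E}) →g
        G.induce (φ '' {e : K.edgeSet | (e : Sym2 (Fin n)) ∈ E}) :=
      ⟨fun z => ⟨φ z.1, ⟨z.1, z.2, rfl⟩⟩, by
        intro z w hz
        have : (lineGraph' K).Adj z.1 w.1 := hz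
        exact hφadj _ _ this⟩
    -- first edges of the two walks
    have hneR : f (⟨i.val+1, by omega⟩, ⟨0, by omega⟩) ≠
        f (⟨i.val+1, by omega⟩, ⟨t+1, by omega⟩) := by
      intro hcon
      have := finj hcon
      rw [Prod.ext_iff] at this
      have h2 := this.2
      rw [Fin.ext_iff] at h2
      simp at h2
    obtain ⟨xs, hxs⟩ := exists_edge_start (rowWalk K f p ht i) hneR
    set es : K.edgeSet := ⟨_, (rowWalk K f p ht i).edges_subset_edgeSet hxs⟩ with hes
    have hEs : (es : Sym2 (Fin n)) ∈ E := Or.inl hxs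
    have hneC : f (⟨0, by omega⟩, ⟨i.val+1, by omega⟩) ≠
        f (⟨t+1, by omega⟩, ⟨i.val+1, by omega⟩) := by
      intro hcon
      have := finj hcon
      rw [Prod.ext_iff] at this
      have h2 := this.1
      rw [Fin.ext_iff] at h2
      simp at h2
    obtain ⟨ys, hys⟩ := exists_edge_start (colWalk K f p ht i) hneC
    set es' : K.edgeSet := ⟨_, (colWalk K f p ht i).edges_subset_edgeSet hys⟩ with hes'
    have hEs' : (es' : Sym2 (Fin n)) ∈ E := Or.inr hys
    -- every edge of E reaches er in the induced line graph
    have reach_to : ∀ (e : K.edgeSet) (he : (e : Sym2 (Fin n)) ∈ E),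
        ((lineGraph' K).induce {z : K.edgeSet | (z : Sym2 (Fin n)) ∈ E}).Reachable
          ⟨e, he⟩ ⟨er, hEr⟩ := by
      intro e he
      rcases he' : he with h1 | h1
      all_goals clear he'
      · have r1 := walk_reach E (rowWalk K f p ht i) (fun z hz => Or.inl hz)
          e (Or.inl h1) h1 es hEs (Sym2.mem_mk_left _ _)
        have r2 := walk_reach E (rowWalk K f p ht i) (fun z hz => Or.inl hz)
          er hEr hxrow es hEs (Sym2.mem_mk_left _ _)
        exact r1.trans r2.symm
      · have r1 := walk_reach E (colWalk K f p ht i) (fun z hz => Or.inr hz)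
          e (Or.inr h1) h1 es' hEs' (Sym2.mem_mk_left _ _)
        have r2 := walk_reach E (colWalk K f p ht i) (fun z hz => Or.inr hz)
          ec hEc hycol es' hEs' (Sym2.mem_mk_left _ _)
        have r3 := reach_of_share E ec er hEc hEr
          (f (⟨i.val+1, by omega⟩, ⟨i.val+1, by omega⟩))
          (Sym2.mem_mk_left _ _) (Sym2.mem_mk_left _ _)
        exact (r1.trans r2.symm).trans r3
    rw [connected_iff]
    constructor
    · intro a b
      obtain ⟨ea, hea, haa⟩ := a.2
      obtain ⟨eb, heb, hbb⟩ := b.2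
      have ra := (reach_to ea hea).map ψ
      have rb := (reach_to eb heb).map ψ
      have haa' : ψ ⟨ea, hea⟩ = a := Subtype.ext haa
      have hbb' : ψ ⟨eb, heb⟩ = b := Subtype.ext hbb
      rw [haa'] at ra
      rw [hbb'] at rb
      exact ra.trans rb.symm
    · exact ⟨⟨φ er, ⟨er, hEr, rfl⟩⟩⟩
  · -- disjointness
    intro i j hij
    rw [Set.disjoint_left]
    rintro x ⟨e, he, rfl⟩ ⟨e', he', hpe⟩
    cases hφinj hpe
    exact crossE_disjoint K f p hemb ht hij he he'
  · -- adjacency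
    intro a b hab
    have hab' : a ≠ b := by
      intro hcon; subst hcon; exact (SimpleGraph.irrefl _) hab
    -- crossing point: row a meets column b at (a+1, b+1)
    have hne1 : f (⟨a.val+1, by omega⟩, ⟨0, by omega⟩) ≠
        f (⟨a.val+1, by omega⟩, ⟨b.val+1, by omega⟩) := by
      intro hcon
      have := finj hcon
      rw [Prod.ext_iff] at this
      have h2 := this.2
      rw [Fin.ext_iff] at h2
      simp at h2
    obtain ⟨x, hx⟩ := exists_edge_end
      (rowW K f p ht (a.val+1) (Nat.le_add_left 1 _) a.isLt (b.val+1) (by omega)) hne1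
    have hxrow : s(f (⟨a.val+1, by omega⟩, ⟨b.val+1, by omega⟩), x) ∈
        (rowWalk K f p ht a).edges :=
      rowW_mono K f p ht (a.val+1) (Nat.le_add_left 1 _) a.isLt (b.val+1) (t+1)
        (by omega) le_rfl (by omega) _ hx
    have hne2 : f (⟨0, by omega⟩, ⟨b.val+1, by omega⟩) ≠
        f (⟨a.val+1, by omega⟩, ⟨b.val+1, by omega⟩) := by
      intro hcon
      have := finj hcon
      rw [Prod.ext_iff] at this
      have h2 := this.1
      rw [Fin.ext_iff] at h2
      simp at h2
    obtain ⟨y, hy⟩ := exists_edge_end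
      (colW K f p ht (b.val+1) (Nat.le_add_left 1 _) b.isLt (a.val+1) (by omega)) hne2
    have hycol : s(f (⟨a.val+1, by omega⟩, ⟨b.val+1, by omega⟩), y) ∈
        (colWalk K f p ht b).edges :=
      colW_mono K f p ht (b.val+1) (Nat.le_add_left 1 _) b.isLt (a.val+1) (t+1)
        (by omega) le_rfl (by omega) _ hy
    set e1 : K.edgeSet := ⟨_, (rowWalk K f p ht a).edges_subset_edgeSet hxrow⟩ with he1
    set e2 : K.edgeSet := ⟨_, (colWalk K f p ht b).edges_subset_edgeSet hycol⟩ with he2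
    refine ⟨φ e1, ⟨e1, Or.inl hxrow, rfl⟩, φ e2, ⟨e2, Or.inr hycol, rfl⟩, ?_⟩
    apply hφadj
    rw [lineGraph', fromRel_adj]
    refine ⟨?_, Or.inl ⟨f (⟨a.val+1, by omega⟩, ⟨b.val+1, by omega⟩),
      Sym2.mem_mk_left _ _, Sym2.mem_mk_left _ _⟩⟩
    intro hcon
    have hcon' : (e1 : Sym2 (Fin n)) = (e2 : Sym2 (Fin n)) := by rw [hcon]
    obtain ⟨u, v, h, e1c, e2c, e3c, hm⟩ :=
      rowW_char K f p ht (a.val+1) (Nat.le_add_left 1 _) a.isLt (t+1) le_rfl _ hxrow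
    obtain ⟨u', v', h', e1c', e2c', e3c', hm'⟩ :=
      colW_char K f p ht (b.val+1) (Nat.le_add_left 1 _) b.isLt (t+1) le_rfl _ hycol
    have hval := congrArg Subtype.val hcon
    simp only [he1, he2] at hval
    rw [hval] at hm
    exact path_edges_disjoint hemb h h' (row_col_ne e1c e2c e3c') hm hm'

end MainConstr

/-- Lemma 7.7: graphs containing a crossed `t`-grid have Hadwiger number
at least about `√t`. -/
theorem crossedGrid_hw_bound :
    ∃ c : ℕ, 1 ≤ c ∧
      ∀ (t : ℕ), 1 ≤ t →
      ∀ (V : Type) [Finite V] (G : SimpleGraph V),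
        ContainsCrossedGrid t G → t ≤ c * (hw G) ^ 2 := by
  refine ⟨1, le_refl 1, ?_⟩
  intro t ht V _ G hcg
  obtain ⟨n, K, f, p, hemb, -, -, -, φ, hφinj, hφadj⟩ := hcg
  have hminor : IsMinor (⊤ : SimpleGraph (Fin t)) G :=
    cross_minor K f p ht hemb G φ hφinj hφadj
  have hbdd : BddAbove {m | IsMinor (⊤ : SimpleGraph (Fin m)) G} :=
    ⟨Nat.card V, fun m hm => isMinor_top_le G m hm⟩
  have hle : t ≤ hw G := le_csSup hbdd hminor
  calc t ≤ hw G := hle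
    _ ≤ (hw G) ^ 2 := Nat.le_self_pow (by norm_num) _
    _ = 1 * (hw G) ^ 2 := (one_mul _).symm
end

section
/- Let (h,c) ∈ ℕ × {0,1,2} with (h,c) ≠ (0,0) and let k ∈ ℕ. Then for every separation (B₁, B₂) of the graph D̂_k^{(h,c)} of order q < k such that both induced subgraphs on B₁ ∖ B₂ and on B₂ ∖ B₁ are connected, at least one of B₁, B₂ has at most (2q+1)² vertices. In other words, the parametric graph ⟨D̂_k^{(h,c)}⟩_k is f-tightly connected for f(q) = (2q+1)². -/
open SimpleGraph

namespace TightAux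

open Relation

abbrev HV (h c k : ℕ) : Type :=
  (Fin k × ZMod (4 * (h + c) * k)) ⊕ (Fin (h + c) × Fin k)

def chainRel {V : Type*} (G : SimpleGraph V) (P : Set V) (u v : V) : Prop :=
  u ∈ P ∧ v ∈ P ∧ G.Adj u v

lemma chainRel_symm {V : Type*} (G : SimpleGraph V) (P : Set V) :
    Symmetric (chainRel G P) := fun _ _ ⟨h1, h2, h3⟩ => ⟨h2, h1, h3.symm⟩

lemma sep_step {V : Type*} {G : SimpleGraph V} {A B P : Set V}
    (hsep : IsSep G A B) (hP : ∀ w ∈ P, w ∉ A ∩ B)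
    {x y : V} (hx : x ∈ A \ B) (h : chainRel G P x y) : y ∈ A \ B := by
  obtain ⟨_, hyP, hadj⟩ := h
  have hy' := hP _ hyP
  have hnot := hsep.2 _ _ hadj hx
  have hyu : y ∈ A ∪ B := by rw [hsep.1]; trivial
  rcases hyu with h1 | h2
  · exact ⟨h1, fun hb => hy' ⟨h1, hb⟩⟩
  · by_cases ha : y ∈ A
    · exact ⟨ha, fun hb => hy' ⟨ha, hb⟩⟩
    · exact absurd ⟨h2, ha⟩ hnot

lemma sep_stay {V : Type*} {G : SimpleGraph V} {A B P : Set V}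
    (hsep : IsSep G A B) (hP : ∀ w ∈ P, w ∉ A ∩ B)
    {u v : V} (hch : Relation.ReflTransGen (chainRel G P) u v)
    (hu : u ∈ A \ B) : v ∈ A \ B := by
  induction hch with
  | refl => exact hu
  | tail _ hstep ih => exact sep_step hsep hP ih hstep

lemma adj_row (h c k : ℕ) (hhc : 1 ≤ h + c) (hk : 0 < k)
    (i : Fin k) (z : ZMod (4 * (h + c) * k)) :
    (hatDyckGrid k h c).Adj (Sum.inl (i, z)) (Sum.inl (i, z + 1)) := by
  have h2 : 2 ≤ 4 * (h + c) * k := by nlinarith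
  haveI : Fact (1 < 4 * (h + c) * k) := ⟨h2⟩
  show (SimpleGraph.fromRel (hatRel k h c)).Adj _ _
  refine (SimpleGraph.fromRel_adj _ _ _).mpr ⟨?_, Or.inl ?_⟩
  · intro hEq
    have hz : z = z + 1 := by simpa using hEq
    exact one_ne_zero (left_eq_add.mp hz)
  · exact Or.inl ⟨(i, z), (i, z + 1), rfl, rfl, Or.inl ⟨rfl, rfl⟩⟩

lemma adj_col (h c k : ℕ) (i i' : Fin k) (hii : (i : ℕ) + 1 = (i' : ℕ))
    (z : ZMod (4 * (h + c) * k)) :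
    (hatDyckGrid k h c).Adj (Sum.inl (i, z)) (Sum.inl (i', z)) := by
  show (SimpleGraph.fromRel (hatRel k h c)).Adj _ _
  refine (SimpleGraph.fromRel_adj _ _ _).mpr ⟨?_, Or.inl ?_⟩
  · intro hEq
    have hii2 : i = i' := by simpa using hEq
    rw [hii2] at hii
    omega
  · exact Or.inl ⟨(i, z), (i', z), rfl, rfl, Or.inr (Or.inl ⟨rfl, hii⟩)⟩

lemma adj_sat (h c k : ℕ) (hk : 0 < k) (s : Fin (h + c) × Fin k) (j : ℕ)
    (hj : j ∈ Finset.Icc 1 4) :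
    (hatDyckGrid k h c).Adj (Sum.inr s)
      (Sum.inl (⟨0, hk⟩, ((4 * k * (s.1 : ℕ) + 4 * (s.2 : ℕ) + j : ℕ) : ZMod (4 * (h + c) * k)))) := by
  show (SimpleGraph.fromRel (hatRel k h c)).Adj _ _
  refine (SimpleGraph.fromRel_adj _ _ _).mpr ⟨by simp, Or.inl ?_⟩
  exact Or.inr ⟨s, _, rfl, rfl, rfl, ⟨j, hj, rfl⟩⟩

lemma row_chain (h c k : ℕ) (hhc : 1 ≤ h + c) (hk : 0 < k)
    (P : Set (HV h c k)) (i : Fin k)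
    (hrow : ∀ z, Sum.inl (i, z) ∈ P) (z z' : ZMod (4 * (h + c) * k)) :
    Relation.ReflTransGen (chainRel (hatDyckGrid k h c) P)
      (Sum.inl (i, z)) (Sum.inl (i, z')) := by
  haveI : NeZero (4 * (h + c) * k) :=
    ⟨(Nat.mul_pos (Nat.mul_pos (by norm_num) hhc) hk).ne'⟩
  have key : ∀ m : ℕ, Relation.ReflTransGen (chainRel (hatDyckGrid k h c) P)
      (Sum.inl (i, z)) (Sum.inl (i, z + (m : ZMod (4 * (h + c) * k)))) := by
    intro m
    induction m with
    | zero => simpa using Relation.ReflTransGen.refl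
    | succ m ih =>
        have hc1 : ((m + 1 : ℕ) : ZMod (4 * (h + c) * k))
            = (m : ZMod (4 * (h + c) * k)) + 1 := by push_cast; ring
        rw [hc1, ← add_assoc]
        exact ih.tail ⟨hrow _, hrow _, adj_row h c k hhc hk i _⟩
  have hz := key (z' - z).val
  have he : z + (((z' - z).val : ℕ) : ZMod (4 * (h + c) * k)) = z' := by
    rw [ZMod.natCast_rightInverse _]; ring
  rwa [he] at hz

lemma col_chain (h c k : ℕ) (P : Set (HV h c k)) (z : ZMod (4 * (h + c) * k))
    (hcol : ∀ i : Fin k, Sum.inl (i, z) ∈ P) (i i' : Fin k) :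
    Relation.ReflTransGen (chainRel (hatDyckGrid k h c) P)
      (Sum.inl (i, z)) (Sum.inl (i', z)) := by
  have key : ∀ (d : ℕ) (a : Fin k) (hd : (a : ℕ) + d < k),
      Relation.ReflTransGen (chainRel (hatDyckGrid k h c) P)
        (Sum.inl (a, z)) (Sum.inl (⟨(a : ℕ) + d, hd⟩, z)) := by
    intro d
    induction d with
    | zero =>
        intro a hd
        have he : (⟨(a : ℕ) + 0, hd⟩ : Fin k) = a := by ext; simp
        rw [he]
    | succ d ih =>
        intro a hd
        have h1 : (a : ℕ) + d < k := by omega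
        refine (ih a h1).tail ⟨hcol _, hcol _, ?_⟩
        exact adj_col h c k ⟨(a : ℕ) + d, h1⟩ ⟨(a : ℕ) + (d + 1), hd⟩ rfl z
  rcases le_total (i : ℕ) (i' : ℕ) with hle | hle
  · have hd : (i : ℕ) + ((i' : ℕ) - (i : ℕ)) < k := by omega
    have hkey := key _ i hd
    have he : (⟨(i : ℕ) + ((i' : ℕ) - (i : ℕ)), hd⟩ : Fin k) = i' := by
      ext; simp; omega
    rwa [he] at hkey
  · have hd : (i' : ℕ) + ((i : ℕ) - (i' : ℕ)) < k := by omega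
    have hkey := key _ i' hd
    have he : (⟨(i' : ℕ) + ((i : ℕ) - (i' : ℕ)), hd⟩ : Fin k) = i := by
      ext; simp; omega
    rw [he] at hkey
    haveI : Std.Symm (chainRel (hatDyckGrid k h c) P) := ⟨fun a b hab => chainRel_symm _ _ hab⟩
    exact Relation.ReflTransGen.symmetric.symm _ _ hkey

lemma proj_rows (h c k : ℕ) (hhc : 1 ≤ h + c) (hk : 0 < k) (S : Set (HV h c k)) :
    ({i : Fin k | ∃ z, Sum.inl (i, z) ∈ S}).ncard ≤ S.ncard := by
  haveI : NeZero (4 * (h + c) * k) :=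
    ⟨(Nat.mul_pos (Nat.mul_pos (by norm_num) hhc) hk).ne'⟩
  have h1 : {i : Fin k | ∃ z, Sum.inl (i, z) ∈ S} ⊆
      (fun p : Fin k × ZMod (4 * (h + c) * k) => p.1) '' (Sum.inl ⁻¹' S) := by
    rintro i ⟨z, hz⟩; exact ⟨(i, z), hz, rfl⟩
  calc ({i : Fin k | ∃ z, Sum.inl (i, z) ∈ S}).ncard
      ≤ ((fun p : Fin k × ZMod (4 * (h + c) * k) => p.1) '' (Sum.inl ⁻¹' S)).ncard :=
        Set.ncard_le_ncard h1 (Set.toFinite _)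
    _ ≤ (Sum.inl ⁻¹' S : Set (Fin k × ZMod (4 * (h + c) * k))).ncard :=
        Set.ncard_image_le (Set.toFinite _)
    _ = (Sum.inl '' (Sum.inl ⁻¹' S : Set (Fin k × ZMod (4 * (h + c) * k)))).ncard :=
        (Set.ncard_image_of_injective _ Sum.inl_injective).symm
    _ ≤ S.ncard := Set.ncard_le_ncard (Set.image_preimage_subset _ _) (Set.toFinite _)

lemma proj_cols (h c k : ℕ) (hhc : 1 ≤ h + c) (hk : 0 < k) (S : Set (HV h c k)) :
    ({z : ZMod (4 * (h + c) * k) | ∃ i, Sum.inl (i, z) ∈ S}).ncard ≤ S.ncard := by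
  haveI : NeZero (4 * (h + c) * k) :=
    ⟨(Nat.mul_pos (Nat.mul_pos (by norm_num) hhc) hk).ne'⟩
  have h1 : {z : ZMod (4 * (h + c) * k) | ∃ i, Sum.inl (i, z) ∈ S} ⊆
      (fun p : Fin k × ZMod (4 * (h + c) * k) => p.2) '' (Sum.inl ⁻¹' S) := by
    rintro z ⟨i, hi⟩; exact ⟨(i, z), hi, rfl⟩
  calc ({z : ZMod (4 * (h + c) * k) | ∃ i, Sum.inl (i, z) ∈ S}).ncard
      ≤ ((fun p : Fin k × ZMod (4 * (h + c) * k) => p.2) '' (Sum.inl ⁻¹' S)).ncard :=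
        Set.ncard_le_ncard h1 (Set.toFinite _)
    _ ≤ (Sum.inl ⁻¹' S : Set (Fin k × ZMod (4 * (h + c) * k))).ncard :=
        Set.ncard_image_le (Set.toFinite _)
    _ = (Sum.inl '' (Sum.inl ⁻¹' S : Set (Fin k × ZMod (4 * (h + c) * k)))).ncard :=
        (Set.ncard_image_of_injective _ Sum.inl_injective).symm
    _ ≤ S.ncard := Set.ncard_le_ncard (Set.image_preimage_subset _ _) (Set.toFinite _)

lemma ncard_prod' {α β : Type*} (s : Set α) (t : Set β) :
    (s ×ˢ t).ncard = s.ncard * t.ncard := by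
  rw [← Nat.card_coe_set_eq, ← Nat.card_coe_set_eq, ← Nat.card_coe_set_eq,
      Nat.card_congr (Equiv.Set.prod s t), Nat.card_prod]

lemma auxCount (h c k : ℕ) (hhc : 1 ≤ h + c) (hk : 0 < k)
    (B₁ B₂ : Set (HV h c k))
    (hsep : IsSep (hatDyckGrid k h c) B₁ B₂)
    (i₀ : Fin k) (z₀ : ZMod (4 * (h + c) * k))
    (hi₀ : ∀ z, (Sum.inl (i₀, z) : HV h c k) ∉ B₁ ∩ B₂)
    (hz₀ : ∀ i, (Sum.inl (i, z₀) : HV h c k) ∉ B₁ ∩ B₂)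
    (hhub : (Sum.inl (i₀, z₀) : HV h c k) ∈ B₁ \ B₂) :
    B₂.ncard ≤ (2 * (B₁ ∩ B₂).ncard + 1) ^ 2 := by
  haveI : NeZero (4 * (h + c) * k) :=
    ⟨(Nat.mul_pos (Nat.mul_pos (by norm_num) hhc) hk).ne'⟩
  classical
  let S : Set (HV h c k) := B₁ ∩ B₂
  let TR : Set (Fin k) := {i | ∃ z, (Sum.inl (i, z) : HV h c k) ∈ S}
  let TC : Set (ZMod (4 * (h + c) * k)) := {z | ∃ i, (Sum.inl (i, z) : HV h c k) ∈ S}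
  let K : Set (HV h c k) := {v | ∃ i z, v = Sum.inl (i, z) ∧ (i ∉ TR ∨ z ∉ TC)}
  have hKS : ∀ w ∈ K, w ∉ S := by
    rintro w ⟨i, z, rfl, hiz⟩ hwS
    rcases hiz with hi | hz
    · exact hi ⟨z, hwS⟩
    · exact hz ⟨i, hwS⟩
  have hi₀' : i₀ ∉ TR := fun ⟨z, hz⟩ => hi₀ z hz
  have hz₀' : z₀ ∉ TC := fun ⟨i, hi⟩ => hz₀ i hi
  have hKside : ∀ w ∈ K, w ∈ B₁ \ B₂ := by
    rintro w ⟨i, z, rfl, hiz⟩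
    have hchain : Relation.ReflTransGen (chainRel (hatDyckGrid k h c) K)
        (Sum.inl (i₀, z₀)) (Sum.inl (i, z)) := by
      rcases hiz with hi | hz
      · exact Relation.ReflTransGen.trans
          (col_chain h c k K z₀ (fun i' => ⟨i', z₀, rfl, Or.inr hz₀'⟩) i₀ i)
          (row_chain h c k hhc hk K i (fun z' => ⟨i, z', rfl, Or.inl hi⟩) z₀ z)
      · exact Relation.ReflTransGen.trans
          (row_chain h c k hhc hk K i₀ (fun z' => ⟨i₀, z', rfl, Or.inl hi₀'⟩) z₀ z)
          (col_chain h c k K z (fun i' => ⟨i', z, rfl, Or.inr hz⟩) i₀ i)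
    exact sep_stay hsep hKS hchain hhub
  have hCgrid : ∀ p : Fin k × ZMod (4 * (h + c) * k),
      (Sum.inl p : HV h c k) ∈ B₂ \ B₁ → p.1 ∈ TR ∧ p.2 ∈ TC := by
    intro p hp
    by_contra hcon
    have hpK : (Sum.inl p : HV h c k) ∈ K := ⟨p.1, p.2, rfl, by tauto⟩
    exact hp.2 (hKside _ hpK).1
  have hCsat : ∀ s : Fin (h + c) × Fin k, (Sum.inr s : HV h c k) ∈ B₂ \ B₁ →
      ((4 * k * (s.1 : ℕ) + 4 * (s.2 : ℕ) + 1 : ℕ) : ZMod (4 * (h + c) * k)) ∈ TC := by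
    intro s hs
    have hadj := adj_sat h c k hk s 1 (by simp)
    set w : HV h c k := Sum.inl
      (⟨0, hk⟩, ((4 * k * (s.1 : ℕ) + 4 * (s.2 : ℕ) + 1 : ℕ) : ZMod (4 * (h + c) * k))) with hw
    have hwu : w ∈ B₁ ∪ B₂ := by rw [hsep.1]; trivial
    by_cases hwS : w ∈ S
    · exact ⟨_, hwS⟩
    rcases hwu with h1 | h2
    · have hwB : w ∈ B₁ \ B₂ := ⟨h1, fun hb => hwS ⟨h1, hb⟩⟩
      exact absurd hs (hsep.2 _ _ hadj.symm hwB)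
    · have hwB : w ∈ B₂ \ B₁ := ⟨h2, fun hb => hwS ⟨hb, h2⟩⟩
      exact (hCgrid _ hwB).2
  have hTR : TR.ncard ≤ S.ncard := proj_rows h c k hhc hk S
  have hTC : TC.ncard ≤ S.ncard := proj_cols h c k hhc hk S
  let CS : Set (Fin (h + c) × Fin k) := {s | (Sum.inr s : HV h c k) ∈ B₂ \ B₁}
  have hCsub : B₂ \ B₁ ⊆ (Sum.inl '' (TR ×ˢ TC)) ∪ (Sum.inr '' CS) := by
    rintro (p | s) hv
    · exact Or.inl ⟨p, ⟨(hCgrid p hv).1, (hCgrid p hv).2⟩, rfl⟩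
    · exact Or.inr ⟨s, hv, rfl⟩
  have hCS : CS.ncard ≤ TC.ncard := by
    apply Set.ncard_le_ncard_of_injOn
      (fun s : Fin (h + c) × Fin k =>
        ((4 * k * (s.1 : ℕ) + 4 * (s.2 : ℕ) + 1 : ℕ) : ZMod (4 * (h + c) * k)))
      (fun s hs => hCsat s hs) ?_ (Set.toFinite _)
    intro s _ t _ hst
    obtain ⟨s1, s2⟩ := s
    obtain ⟨t1, t2⟩ := t
    simp only at hst
    have hlt : ∀ (a : Fin (h + c)) (b : Fin k),
        4 * k * (a : ℕ) + 4 * (b : ℕ) + 1 < 4 * (h + c) * k := by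
      intro a b
      have h1 : (a : ℕ) + 1 ≤ h + c := a.isLt
      have h2 : (b : ℕ) + 1 ≤ k := b.isLt
      nlinarith
    have hval := congrArg ZMod.val hst
    rw [ZMod.val_cast_of_lt (hlt s1 s2), ZMod.val_cast_of_lt (hlt t1 t2)] at hval
    have e1 : 4 * (k * (s1 : ℕ) + (s2 : ℕ)) = 4 * (k * (t1 : ℕ) + (t2 : ℕ)) := by
      ring_nf; ring_nf at hval; linarith
    have h2 : k * (s1 : ℕ) + (s2 : ℕ) = k * (t1 : ℕ) + (t2 : ℕ) :=
      Nat.eq_of_mul_eq_mul_left (by norm_num) e1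
    have ha : (s1 : ℕ) = (t1 : ℕ) := by
      by_contra hne
      rcases Nat.lt_or_ge (s1 : ℕ) (t1 : ℕ) with hlt' | hge
      · have hm : k * (s1 : ℕ) + k ≤ k * (t1 : ℕ) := by
          rw [← Nat.mul_succ]; exact Nat.mul_le_mul_left k hlt'
        have hs2 := s2.isLt
        linarith
      · have hlt'' : (t1 : ℕ) < (s1 : ℕ) := by omega
        have hm : k * (t1 : ℕ) + k ≤ k * (s1 : ℕ) := by
          rw [← Nat.mul_succ]; exact Nat.mul_le_mul_left k hlt''
        have ht2 := t2.isLt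
        linarith
    have hb : (s2 : ℕ) = (t2 : ℕ) := by
      rw [ha] at h2
      omega
    exact Prod.ext (Fin.ext ha) (Fin.ext hb)
  have hC : (B₂ \ B₁).ncard ≤ S.ncard * S.ncard + S.ncard := by
    calc (B₂ \ B₁).ncard
        ≤ ((Sum.inl '' (TR ×ˢ TC)) ∪ (Sum.inr '' CS)).ncard :=
          Set.ncard_le_ncard hCsub (Set.toFinite _)
      _ ≤ (Sum.inl '' (TR ×ˢ TC)).ncard + (Sum.inr '' CS).ncard :=
          Set.ncard_union_le _ _
      _ = (TR ×ˢ TC).ncard + CS.ncard := by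
          rw [Set.ncard_image_of_injective _ Sum.inl_injective,
            Set.ncard_image_of_injective _ Sum.inr_injective]
      _ ≤ TR.ncard * TC.ncard + TC.ncard := by
          rw [ncard_prod']
          exact Nat.add_le_add le_rfl hCS
      _ ≤ S.ncard * S.ncard + S.ncard :=
          Nat.add_le_add (Nat.mul_le_mul hTR hTC) hTC
  have hB2 : B₂ ⊆ (B₂ \ B₁) ∪ S := by
    intro v hv
    by_cases h1 : v ∈ B₁
    · exact Or.inr ⟨h1, hv⟩
    · exact Or.inl ⟨hv, h1⟩
  have hfinal : B₂.ncard ≤ S.ncard * S.ncard + S.ncard + S.ncard := by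
    calc B₂.ncard ≤ ((B₂ \ B₁) ∪ S).ncard := Set.ncard_le_ncard hB2 (Set.toFinite _)
      _ ≤ (B₂ \ B₁).ncard + S.ncard := Set.ncard_union_le _ _
      _ ≤ S.ncard * S.ncard + S.ncard + S.ncard := Nat.add_le_add hC le_rfl
  have : S.ncard = (B₁ ∩ B₂).ncard := rfl
  nlinarith [hfinal]

lemma isSep_symm {V : Type*} {G : SimpleGraph V} {A B : Set V}
    (h : IsSep G A B) : IsSep G B A := by
  refine ⟨by rw [Set.union_comm]; exact h.1, fun u v hadj hu hv => ?_⟩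
  exact h.2 v u hadj.symm hv hu

end TightAux


/-- Lemma 7.10: the satellite-augmented Dyck-grid `D̂_k^{(h,c)}` is
`f`-tightly connected for `f(q) = (2q+1)²`. -/
theorem hatDyckGrid_tightlyConnected
    (h c k : ℕ) (hc : c ≤ 2) (hhc : 1 ≤ h + c)
    (B₁ B₂ : Set ((Fin k × ZMod (4 * (h + c) * k)) ⊕ (Fin (h + c) × Fin k)))
    (hsep : IsSep (hatDyckGrid k h c) B₁ B₂)
    (hord : (B₁ ∩ B₂).ncard < k)
    (hconn₁ : ((hatDyckGrid k h c).induce (B₁ \ B₂)).Connected)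
    (hconn₂ : ((hatDyckGrid k h c).induce (B₂ \ B₁)).Connected) :
    B₁.ncard ≤ (2 * (B₁ ∩ B₂).ncard + 1) ^ 2 ∨
    B₂.ncard ≤ (2 * (B₁ ∩ B₂).ncard + 1) ^ 2 := by
  have hk : 0 < k := lt_of_le_of_lt (Nat.zero_le _) hord
  haveI : NeZero (4 * (h + c) * k) :=
    ⟨(Nat.mul_pos (Nat.mul_pos (by norm_num) hhc) hk).ne'⟩
  have hTR := TightAux.proj_rows h c k hhc hk (B₁ ∩ B₂)
  have hTC := TightAux.proj_cols h c k hhc hk (B₁ ∩ B₂)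
  have hex_i : ∃ i₀ : Fin k, ∀ z, Sum.inl (i₀, z) ∉ B₁ ∩ B₂ := by
    by_contra hcon
    push_neg at hcon
    have heq : {i : Fin k | ∃ z, Sum.inl (i, z) ∈ B₁ ∩ B₂} = Set.univ :=
      Set.eq_univ_iff_forall.mpr fun i => hcon i
    rw [heq, Set.ncard_univ, Nat.card_eq_fintype_card, Fintype.card_fin] at hTR
    omega
  have hex_z : ∃ z₀ : ZMod (4 * (h + c) * k), ∀ i, Sum.inl (i, z₀) ∉ B₁ ∩ B₂ := by
    by_contra hcon
    push_neg at hcon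
    have heq : {z : ZMod (4 * (h + c) * k) | ∃ i, Sum.inl (i, z) ∈ B₁ ∩ B₂} = Set.univ :=
      Set.eq_univ_iff_forall.mpr fun z => hcon z
    rw [heq, Set.ncard_univ, Nat.card_zmod] at hTC
    have hkn : k ≤ 4 * (h + c) * k := by nlinarith
    omega
  obtain ⟨i₀, hi₀⟩ := hex_i
  obtain ⟨z₀, hz₀⟩ := hex_z
  have hhubS : (Sum.inl (i₀, z₀) : (Fin k × ZMod (4 * (h + c) * k)) ⊕ (Fin (h + c) × Fin k))
      ∉ B₁ ∩ B₂ := hi₀ z₀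
  have hhubU : (Sum.inl (i₀, z₀) : (Fin k × ZMod (4 * (h + c) * k)) ⊕ (Fin (h + c) × Fin k))
      ∈ B₁ ∪ B₂ := by rw [hsep.1]; trivial
  rcases hhubU with h1 | h2
  · right
    exact TightAux.auxCount h c k hhc hk B₁ B₂ hsep i₀ z₀ hi₀ hz₀
      ⟨h1, fun hb => hhubS ⟨h1, hb⟩⟩
  · left
    have hres := TightAux.auxCount h c k hhc hk B₂ B₁ (TightAux.isSep_symm hsep) i₀ z₀
      (fun z => by rw [Set.inter_comm]; exact hi₀ z)
      (fun i => by rw [Set.inter_comm]; exact hz₀ i)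
      ⟨h2, fun hb => hhubS ⟨hb, h2⟩⟩
    rwa [Set.inter_comm] at hres
end
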